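/- arXiv:2604.25873 — 5 statements merged into one kernel-verified Lean document; each statement's English description precedes it below -/
import Mathlib

section
/- Let w ∈ A_p for some 1 < p < ∞ and let σ = w^{1-p'} be the dual weight (p' the Hölder conjugate of p). Set ε = (p-1)/(2^{n+1}([σ]_{A_∞} - 1) + 1). Then w ∈ A_{p-ε} with [w]_{A_{p-ε}} ≤ (2[σ]_{A_∞})^{p-1} [w]_{A_p}. -/
open MeasureTheory Real

noncomputable section

/-- `Rn n` is Euclidean space `ℝⁿ` with the sup metric, so that closed balls are cubes. -/
abbrev Rn (n : ℕ) := Fin n → ℝ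

/-- An (axis-parallel, closed) cube in `ℝⁿ`: a closed ball for the sup metric with
positive radius. -/
def IsCube {n : ℕ} (Q : Set (Rn n)) : Prop :=
  ∃ (c : Rn n) (r : ℝ), 0 < r ∧ Q = Metric.closedBall c r

/-- Lebesgue measure `|Q|` as a real number. -/
def vol {n : ℕ} (Q : Set (Rn n)) : ℝ := (volume Q).toReal

/-- `w(Q) = ∫_Q w`. -/
def intOn {n : ℕ} (w : Rn n → ℝ) (Q : Set (Rn n)) : ℝ := ∫ x in Q, w x

/-- Lebesgue average `(1/|Q|) ∫_Q f`. -/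
def avgOn {n : ℕ} (Q : Set (Rn n)) (f : Rn n → ℝ) : ℝ := (vol Q)⁻¹ * ∫ x in Q, f x

/-- Weighted average `f_{Q,w} = (1/w(Q)) ∫_Q f w`. -/
def wavgOn {n : ℕ} (w : Rn n → ℝ) (Q : Set (Rn n)) (f : Rn n → ℝ) : ℝ :=
  (intOn w Q)⁻¹ * ∫ x in Q, f x * w x

/-- Hardy–Littlewood maximal function over cubes. -/
def maximalFn {n : ℕ} (f : Rn n → ℝ) (x : Rn n) : ℝ :=
  sSup {a | ∃ Q : Set (Rn n), IsCube Q ∧ x ∈ Q ∧ a = avgOn Q (fun y => |f y|)}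

/-- The set of ratios defining the Fujii–Wilson `A_∞` constant. -/
def fwSet {n : ℕ} (w : Rn n → ℝ) : Set ℝ :=
  {a | ∃ Q : Set (Rn n), IsCube Q ∧
    a = (intOn w Q)⁻¹ * ∫ x in Q, maximalFn (Q.indicator w) x}

/-- Fujii–Wilson constant `[w]_{A_∞} = sup_Q (1/w(Q)) ∫_Q M(w χ_Q)`. -/
def fujiiWilson {n : ℕ} (w : Rn n → ℝ) : ℝ := sSup (fwSet w)

open Classical in
/-- The `A_p` ratio of `w` on the cube `Q`:
`((1/|Q|)∫_Q w)((1/|Q|)∫_Q w^{1-p'})^{p-1}` for `p > 1` (note `1 - p' = -1/(p-1)`),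
with the ess-sup convention for `p = 1`. -/
def apRatio {n : ℕ} (p : ℝ) (w : Rn n → ℝ) (Q : Set (Rn n)) : ℝ :=
  if p = 1 then
    avgOn Q w * essSup (fun x => (w x)⁻¹) (volume.restrict Q)
  else
    avgOn Q w * (avgOn Q (fun x => w x ^ (-(p - 1)⁻¹))) ^ (p - 1)

/-- The set of `A_p` ratios of `w` over all cubes. -/
def apSet {n : ℕ} (p : ℝ) (w : Rn n → ℝ) : Set ℝ :=
  {a | ∃ Q : Set (Rn n), IsCube Q ∧ a = apRatio p w Q}

/-- The Muckenhoupt `A_p` constant `[w]_{A_p}`. -/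
def apConst {n : ℕ} (p : ℝ) (w : Rn n → ℝ) : ℝ := sSup (apSet p w)

/-- The set of ratios defining the Hruščev `A_∞` constant. -/
def hruscevSet {n : ℕ} (w : Rn n → ℝ) : Set ℝ :=
  {a | ∃ Q : Set (Rn n), IsCube Q ∧
    a = avgOn Q w * Real.exp (avgOn Q (fun x => Real.log (w x)⁻¹))}

/-- Hruščev constant `[w]'_{A_∞} = sup_Q ((1/|Q|)∫_Q w) exp((1/|Q|)∫_Q log w⁻¹)`. -/
def hruscev {n : ℕ} (w : Rn n → ℝ) : ℝ := sSup (hruscevSet w)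

/-- The set of ratios defining the logarithmic `A_∞` constant. -/
def logAinfSet {n : ℕ} (w : Rn n → ℝ) : Set ℝ :=
  {a | ∃ Q : Set (Rn n), IsCube Q ∧
    a = (intOn w Q)⁻¹ * ∫ x in Q, (1 + max (Real.log (w x / avgOn Q w)) 0) * w x}

/-- Logarithmic `A_∞` constant
`[w]_{A_∞}^{log} = sup_Q (1/w(Q)) ∫_Q (1 + log⁺(w/w_Q)) w`. -/
def logAinf {n : ℕ} (w : Rn n → ℝ) : ℝ := sSup (logAinfSet w)

/-- The set of mean oscillations of `f` over cubes. -/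
def bmoSet {n : ℕ} (f : Rn n → ℝ) : Set ℝ :=
  {a | ∃ Q : Set (Rn n), IsCube Q ∧ a = avgOn Q (fun x => |f x - avgOn Q f|)}

/-- The `BMO` seminorm `‖f‖_{BMO} = sup_Q (1/|Q|) ∫_Q |f - f_Q|`. -/
def bmoNorm {n : ℕ} (f : Rn n → ℝ) : ℝ := sSup (bmoSet f)

/-- The set of weighted mean oscillations of `f` over cubes. -/
def bmoWSet {n : ℕ} (w f : Rn n → ℝ) : Set ℝ :=
  {a | ∃ Q : Set (Rn n), IsCube Q ∧
    a = (intOn w Q)⁻¹ * ∫ x in Q, |f x - wavgOn w Q f| * w x}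

/-- The weighted `BMO` seminorm `‖f‖_{BMO_w} = sup_Q (1/w(Q)) ∫_Q |f - f_{Q,w}| w`. -/
def bmoWNorm {n : ℕ} (w f : Rn n → ℝ) : ℝ := sSup (bmoWSet w f)

namespace Stmt5Aux

open Metric Filter Topology Set

variable {n : ℕ}

lemma cube_meas {Q : Set (Rn n)} (hQ : IsCube Q) : MeasurableSet Q := by
  obtain ⟨c, r, _, rfl⟩ := hQ; exact measurableSet_closedBall

lemma volume_cb (c : Rn n) {r : ℝ} (hr : 0 ≤ r) :
    volume (closedBall c r) = ENNReal.ofReal ((2 * r) ^ n) := by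
  rw [Real.volume_pi_closedBall c hr, Fintype.card_fin]

lemma vol_cb (c : Rn n) {r : ℝ} (hr : 0 ≤ r) : vol (closedBall c r) = (2 * r) ^ n := by
  rw [vol, volume_cb c hr, ENNReal.toReal_ofReal (by positivity)]

lemma cube_vol_pos {Q : Set (Rn n)} (hQ : IsCube Q) : 0 < vol Q := by
  obtain ⟨c, r, hr, rfl⟩ := hQ
  rw [vol_cb c hr.le]; positivity

lemma cube_volume_ne_top {Q : Set (Rn n)} (hQ : IsCube Q) : volume Q ≠ ⊤ := by
  obtain ⟨c, r, hr, rfl⟩ := hQ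
  rw [volume_cb c hr.le]; exact ENNReal.ofReal_ne_top

lemma cube_volume_pos {Q : Set (Rn n)} (hQ : IsCube Q) : 0 < volume Q := by
  have h := cube_vol_pos hQ
  rw [vol] at h
  exact (ENNReal.toReal_pos_iff.mp h).1

lemma avg_nonneg {Q : Set (Rn n)} {f : Rn n → ℝ} (hf : ∀ x, 0 ≤ f x) : 0 ≤ avgOn Q f :=
  mul_nonneg (inv_nonneg.mpr ENNReal.toReal_nonneg) (integral_nonneg hf)

lemma avg_le_const {Q : Set (Rn n)} (hQ : IsCube Q) {f : Rn n → ℝ} {C : ℝ}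
    (hf : IntegrableOn f Q volume) (h : ∀ᵐ x ∂(volume.restrict Q), f x ≤ C) :
    avgOn Q f ≤ C := by
  have hi : IntegrableOn (fun _ => C) Q volume :=
    (integrableOn_const_iff).mpr (Or.inr (lt_top_iff_ne_top.mpr (cube_volume_ne_top hQ)))
  have h1 : ∫ x in Q, f x ≤ ∫ x in Q, (fun _ => C) x := integral_mono_ae hf hi h
  rw [setIntegral_const, smul_eq_mul] at h1
  have hv := cube_vol_pos hQ
  have h2 : avgOn Q f ≤ (vol Q)⁻¹ * (vol Q * C) :=
    mul_le_mul_of_nonneg_left h1 (inv_nonneg.mpr hv.le)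
  calc avgOn Q f ≤ (vol Q)⁻¹ * (vol Q * C) := h2
    _ = C := by field_simp

section Maximal

variable (f : Rn n → ℝ) (hf0 : ∀ x, 0 ≤ f x) (hfi : Integrable f volume)
  (S : ℝ) (hfS : ∀ᵐ x ∂(volume : Measure (Rn n)), f x ≤ S)

lemma maximal_set_nonempty (x : Rn n) :
    Set.Nonempty {a | ∃ Q : Set (Rn n), IsCube Q ∧ x ∈ Q ∧ a = avgOn Q (fun y => |f y|)} :=
  ⟨_, closedBall x 1, ⟨x, 1, one_pos, rfl⟩, mem_closedBall_self zero_le_one, rfl⟩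

include hf0 in
lemma abs_eq_self_fun : (fun y => |f y|) = f := funext fun y => abs_of_nonneg (hf0 y)

include hf0 hfi hfS in
lemma avg_le_S {Q : Set (Rn n)} (hQ : IsCube Q) : avgOn Q (fun y => |f y|) ≤ S := by
  rw [abs_eq_self_fun f hf0]
  exact avg_le_const hQ hfi.integrableOn (ae_restrict_of_ae hfS)

include hf0 hfi hfS in
lemma bddAbove_maximal_set (x : Rn n) :
    BddAbove {a | ∃ Q : Set (Rn n), IsCube Q ∧ x ∈ Q ∧ a = avgOn Q (fun y => |f y|)} := by
  refine ⟨S, ?_⟩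
  rintro a ⟨Q, hQ, -, rfl⟩
  exact avg_le_S f hf0 hfi S hfS hQ

include hf0 hfi hfS in
lemma le_maximal {x : Rn n} {Q : Set (Rn n)} (hQ : IsCube Q) (hx : x ∈ Q) :
    avgOn Q f ≤ maximalFn f x := by
  exact le_csSup (bddAbove_maximal_set f hf0 hfi S hfS x)
    ⟨Q, hQ, hx, by rw [abs_eq_self_fun f hf0]⟩

include hf0 hfi hfS in
lemma maximal_nonneg (x : Rn n) : 0 ≤ maximalFn f x :=
  le_trans (avg_nonneg hf0)
    (le_maximal f hf0 hfi S hfS ⟨x, 1, one_pos, rfl⟩ (mem_closedBall_self zero_le_one))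

include hf0 hfi hfS in
lemma maximal_le (x : Rn n) : maximalFn f x ≤ S := by
  refine csSup_le (maximal_set_nonempty f x) ?_
  rintro a ⟨Q, hQ, -, rfl⟩
  exact avg_le_S f hf0 hfi S hfS hQ

include hf0 hfi hfS in
lemma maximal_measurable : Measurable (maximalFn f) := by
  rcases eq_or_ne n 0 with hn | hn
  · subst hn; exact Subsingleton.measurable
  have hlsc : LowerSemicontinuous (maximalFn f) := by
    rw [lowerSemicontinuous_iff_isOpen_preimage]
    intro t
    rw [Metric.isOpen_iff]
    intro x hx
    have hx' : t < maximalFn f x := hx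
    rcases lt_or_ge t 0 with ht | ht
    · exact ⟨1, one_pos, fun y _ =>
        lt_of_lt_of_le ht (maximal_nonneg f hf0 hfi S hfS y)⟩
    obtain ⟨a, ⟨Q0, hQ0, hxQ0, ha⟩, hta⟩ :=
      exists_lt_of_lt_csSup (maximal_set_nonempty f x) hx'
    obtain ⟨c, r, hr, rfl⟩ := hQ0
    rw [abs_eq_self_fun f hf0] at ha
    subst ha
    set a := avgOn (closedBall c r) f with ha_def
    have ha0 : 0 < a := lt_of_le_of_lt ht hta
    set b := (a + t) / 2 with hb_def
    have htb : t < b := by rw [hb_def]; linarith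
    have hba : b < a := by rw [hb_def]; linarith
    have hb0 : 0 < b := lt_of_le_of_lt ht htb
    have hab1 : 1 < a / b := (one_lt_div hb0).mpr hba
    set θ : ℝ := (a / b) ^ ((n : ℝ))⁻¹ with hθ_def
    have hθ1 : 1 < θ := by
      rw [hθ_def]
      rw [Real.one_lt_rpow_iff_of_pos (by positivity)]
      exact Or.inl ⟨hab1, by positivity⟩
    have hθn : θ ^ n = a / b := Real.rpow_inv_natCast_pow (by positivity) hn
    refine ⟨(θ - 1) * r, by nlinarith, fun y hy => ?_⟩
    have hyx : dist y x < (θ - 1) * r := mem_ball.mp hy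
    have hxc : dist x c ≤ r := mem_closedBall.mp hxQ0
    have hyc : y ∈ closedBall c (θ * r) := by
      rw [mem_closedBall]
      calc dist y c ≤ dist y x + dist x c := dist_triangle y x c
        _ ≤ (θ - 1) * r + r := by linarith
        _ = θ * r := by ring
    have hθr : 0 < θ * r := by nlinarith
    have hcube : IsCube (closedBall c (θ * r)) := ⟨c, θ * r, hθr, rfl⟩
    have hle := le_maximal f hf0 hfi S hfS hcube hyc
    have hmono : ∫ z in closedBall c r, f z ≤ ∫ z in closedBall c (θ * r), f z := by
      refine setIntegral_mono_set hfi.integrableOn (ae_of_all _ hf0) ?_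
      exact HasSubset.Subset.eventuallyLE (closedBall_subset_closedBall (by nlinarith))
    have hvol1 : vol (closedBall c r) = (2 * r) ^ n := vol_cb c hr.le
    have hvol2 : vol (closedBall c (θ * r)) = (2 * (θ * r)) ^ n := vol_cb c hθr.le
    have hint : ∫ z in closedBall c r, f z = (2 * r) ^ n * a := by
      rw [ha_def, avgOn, hvol1]
      have h2r : (0:ℝ) < (2 * r) ^ n := by positivity
      field_simp
    have hblb : b ≤ avgOn (closedBall c (θ * r)) f := by
      rw [avgOn, hvol2]
      have h2 : ((2 * (θ * r)) ^ n)⁻¹ * ∫ z in closedBall c r, f z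
          ≤ ((2 * (θ * r)) ^ n)⁻¹ * ∫ z in closedBall c (θ * r), f z :=
        mul_le_mul_of_nonneg_left hmono (by positivity)
      refine le_trans (le_of_eq ?_) h2
      rw [hint]
      have hexp : (2 * (θ * r)) ^ n = (a / b) * (2 * r) ^ n := by
        rw [← hθn]; ring
      rw [hexp]
      have h2r : (0:ℝ) < (2 * r) ^ n := by positivity
      rw [mul_inv, inv_div]
      field_simp
    show t < maximalFn f y
    exact lt_of_lt_of_le htb (le_trans hblb hle)
  exact hlsc.measurable

include hf0 hfi hfS in
lemma maximal_integrableOn (hS : 0 ≤ S) {Q : Set (Rn n)} (hQ : IsCube Q) :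
    IntegrableOn (maximalFn f) Q volume := by
  refine Measure.integrableOn_of_bounded (M := S) (cube_volume_ne_top hQ)
    (maximal_measurable f hf0 hfi S hfS).aestronglyMeasurable ?_
  refine ae_of_all _ fun x => ?_
  rw [Real.norm_eq_abs, abs_of_nonneg (maximal_nonneg f hf0 hfi S hfS x)]
  exact maximal_le f hf0 hfi S hfS x

end Maximal

end Stmt5Aux

namespace Stmt5Aux

open Metric Filter Topology Set

theorem main {n : ℕ} (p : ℝ) (hp : 1 < p) (w : Rn n → ℝ) (hw0 : ∀ x, 0 ≤ w x)
    (hwl : LocallyIntegrable w volume)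
    (σ : Rn n → ℝ) (hσdef : σ = fun x => w x ^ (-(p - 1)⁻¹))
    (hσl : LocallyIntegrable σ volume)
    (hpos : ∀ Q : Set (Rn n), IsCube Q → 0 < intOn w Q)
    (hσpos : ∀ Q : Set (Rn n), IsCube Q → 0 < intOn σ Q)
    (hap : BddAbove (apSet p w))
    (hfw : BddAbove (fwSet σ)) (hfw1 : 1 ≤ fujiiWilson σ)
    (hRH : ∀ Q : Set (Rn n), IsCube Q → ∀ δ : ℝ, 0 ≤ δ →
      δ ≤ 1 / ((2 : ℝ) ^ (n + 1) * (fujiiWilson σ - 1)) →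
      avgOn Q (fun x => σ x ^ (1 + δ)) ≤ 2 * fujiiWilson σ * (avgOn Q σ) ^ (1 + δ))
    (ε : ℝ) (hε : ε = (p - 1) / ((2 : ℝ) ^ (n + 1) * (fujiiWilson σ - 1) + 1)) :
    ∀ Q : Set (Rn n), IsCube Q →
      apRatio (p - ε) w Q ≤ (2 * fujiiWilson σ) ^ (p - 1) * apConst p w := by
  intro Q hQ
  have hp1 : p - 1 ≠ 0 := sub_ne_zero.mpr (ne_of_gt hp)
  have hpne : p ≠ 1 := ne_of_gt hp
  have hσ0 : ∀ x, 0 ≤ σ x := fun x => by rw [hσdef]; exact Real.rpow_nonneg (hw0 x) _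
  have hapRatio : ∀ Q' : Set (Rn n), IsCube Q' →
      apRatio p w Q' = avgOn Q' w * (avgOn Q' σ) ^ (p - 1) := by
    intro Q' _
    rw [apRatio, if_neg hpne, hσdef]
  have havgw : 0 ≤ avgOn Q w := avg_nonneg hw0
  have havgσ : 0 ≤ avgOn Q σ := avg_nonneg hσ0
  have hapQ : 0 ≤ apRatio p w Q := by
    rw [hapRatio Q hQ]; exact mul_nonneg havgw (Real.rpow_nonneg havgσ _)
  have hle_const : ∀ Q' : Set (Rn n), IsCube Q' → apRatio p w Q' ≤ apConst p w :=
    fun Q' h => le_csSup hap ⟨Q', h, rfl⟩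
  have hapC : 0 ≤ apConst p w := le_trans hapQ (hle_const Q hQ)
  set F := fujiiWilson σ with hFdef
  have h2F : (1:ℝ) ≤ 2 * F := by linarith
  rcases eq_or_lt_of_le hfw1 with hF1 | hF1
  · -- Fujii–Wilson constant equal to 1
    have hF1' : F = 1 := hF1.symm
    have hεv : ε = p - 1 := by rw [hε, hF1']; norm_num
    have hpe1 : p - ε = 1 := by rw [hεv]; ring
    rw [apRatio, if_pos hpe1]
    have hQm := cube_meas hQ
    have hQvol : volume Q ≠ 0 := (cube_volume_pos hQ).ne'
    have hne : (ae (volume.restrict Q)).NeBot :=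
      ae_neBot.mpr (by simp [Measure.restrict_eq_zero, hQvol])
    have hRHS0 : (0:ℝ) ≤ (2*F)^(p-1) * apConst p w :=
      mul_nonneg (Real.rpow_nonneg (by linarith) _) hapC
    by_cases hbdd : IsBoundedUnder (· ≤ ·) (ae (volume.restrict Q)) (fun x => (w x)⁻¹)
    swap
    · -- essential sup is junk value 0
      have he0 : essSup (fun x => (w x)⁻¹) (volume.restrict Q) = 0 := by
        rw [essSup, Filter.limsup_eq]
        convert Real.sInf_empty using 2
        · rfl
        rw [Set.eq_empty_iff_forall_notMem]
        intro a ha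
        exact hbdd ⟨a, eventually_map.mpr ha⟩
      rw [he0, mul_zero]
      exact hRHS0
    set e := essSup (fun x => (w x)⁻¹) (volume.restrict Q) with he_def
    have hae : ∀ᵐ x ∂(volume.restrict Q), (w x)⁻¹ ≤ e := eventually_le_limsup hbdd
    have he0 : 0 ≤ e := by
      obtain ⟨x, hx⟩ := hae.exists
      exact le_trans (inv_nonneg.mpr (hw0 x)) hx
    have hp1inv : (0:ℝ) ≤ (p-1)⁻¹ := inv_nonneg.mpr (by linarith)
    set S := e ^ (p-1)⁻¹ with hS_def
    have hS0 : 0 ≤ S := Real.rpow_nonneg he0 _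
    have hσeq : ∀ x, σ x = ((w x)⁻¹) ^ (p-1)⁻¹ := by
      intro x
      rw [hσdef]
      show w x ^ (-(p - 1)⁻¹) = ((w x)⁻¹) ^ (p-1)⁻¹
      rw [Real.inv_rpow (hw0 x)]
      exact Real.rpow_neg (hw0 x) _
    have hσS : ∀ᵐ x ∂(volume.restrict Q), σ x ≤ S := by
      filter_upwards [hae] with x hx
      rw [hσeq x, hS_def]
      exact Real.rpow_le_rpow (inv_nonneg.mpr (hw0 x)) hx hp1inv
    set g := Q.indicator σ with hg_def
    have hg0 : ∀ x, 0 ≤ g x := fun x => Set.indicator_nonneg (fun y _ => hσ0 y) x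
    have hσint : IntegrableOn σ Q volume := by
      obtain ⟨c, R, hR, hQeq⟩ := id hQ
      rw [hQeq]; exact hσl.integrableOn_isCompact (isCompact_closedBall c R)
    have hgint : Integrable g volume := hσint.integrable_indicator hQm
    have hgS : ∀ᵐ x ∂(volume : Measure (Rn n)), g x ≤ S := by
      filter_upwards [(ae_restrict_iff' hQm).mp hσS] with x hx
      by_cases hxQ : x ∈ Q
      · rw [hg_def, Set.indicator_of_mem hxQ]; exact hx hxQ
      · rw [hg_def, Set.indicator_of_notMem hxQ]; exact hS0
    have hMint : IntegrableOn (maximalFn g) Q volume :=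
      maximal_integrableOn g hg0 hgint S hgS hS0 hQ
    have hσQpos := hσpos Q hQ
    have hMle : ∫ x in Q, maximalFn g x ≤ intOn σ Q := by
      have hmem : (intOn σ Q)⁻¹ * ∫ x in Q, maximalFn (Q.indicator σ) x ∈ fwSet σ :=
        ⟨Q, hQ, rfl⟩
      have h1 : (intOn σ Q)⁻¹ * ∫ x in Q, maximalFn (Q.indicator σ) x ≤ 1 :=
        le_of_le_of_eq (le_csSup hfw hmem) hF1'
      have h2 : intOn σ Q * ((intOn σ Q)⁻¹ * ∫ x in Q, maximalFn (Q.indicator σ) x)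
          ≤ intOn σ Q * 1 := mul_le_mul_of_nonneg_left h1 hσQpos.le
      rw [← mul_assoc, mul_inv_cancel₀ hσQpos.ne', one_mul, mul_one] at h2
      exact h2
    have hgavg : ∀ P : Set (Rn n), P ⊆ Q → MeasurableSet P → avgOn P g = avgOn P σ := by
      intro P hPQ hPm
      rw [avgOn, avgOn]
      congr 1
      refine setIntegral_congr_fun hPm fun x hx => ?_
      rw [hg_def]; exact Set.indicator_of_mem (hPQ hx) σ
    have hsub : ∀ P : Set (Rn n), IsCube P → P ⊆ Q → avgOn P σ ≤ avgOn Q σ := by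
      intro P hP hPQ
      have hPm := cube_meas hP
      have hvolP := cube_vol_pos hP
      have hMP : ∀ x ∈ P, avgOn P σ ≤ maximalFn g x := fun x hx => by
        rw [← hgavg P hPQ hPm]
        exact le_maximal g hg0 hgint S hgS hP hx
      have hMQ : ∀ x ∈ Q \ P, avgOn Q σ ≤ maximalFn g x := fun x hx => by
        rw [← hgavg Q subset_rfl hQm]
        exact le_maximal g hg0 hgint S hgS hQ hx.1
      have hsplit : ∫ x in Q, maximalFn g x
          = (∫ x in P, maximalFn g x) + ∫ x in Q \ P, maximalFn g x := by
        have hu : P ∪ (Q \ P) = Q := Set.union_diff_cancel hPQ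
        have h1 := setIntegral_union (f := maximalFn g) (μ := volume)
          Set.disjoint_sdiff_right (hQm.diff hPm)
          (hMint.mono_set hPQ) (hMint.mono_set Set.diff_subset)
        rw [hu] at h1
        exact h1
      have hIP : vol P * avgOn P σ ≤ ∫ x in P, maximalFn g x := by
        have h1 : ∫ _x in P, avgOn P σ ∂volume ≤ ∫ x in P, maximalFn g x :=
          setIntegral_mono_on
            ((integrableOn_const_iff).mpr (Or.inr (lt_top_iff_ne_top.mpr (cube_volume_ne_top hP))))
            (hMint.mono_set hPQ) hPm hMP
        rwa [setIntegral_const, smul_eq_mul] at h1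
      have hvd : (volume (Q \ P)).toReal = vol Q - vol P := by
        rw [measure_diff hPQ hPm.nullMeasurableSet
          (lt_top_iff_ne_top.mp (lt_of_le_of_lt (measure_mono hPQ)
            (lt_top_iff_ne_top.mpr (cube_volume_ne_top hQ)))),
          ENNReal.toReal_sub_of_le (measure_mono hPQ) (cube_volume_ne_top hQ)]
        rfl
      have hIQP : (vol Q - vol P) * avgOn Q σ ≤ ∫ x in Q \ P, maximalFn g x := by
        have h1 : ∫ _x in Q \ P, avgOn Q σ ∂volume ≤ ∫ x in Q \ P, maximalFn g x :=
          setIntegral_mono_on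
            ((integrableOn_const_iff).mpr (Or.inr (lt_of_le_of_lt
              (measure_mono Set.diff_subset) (lt_top_iff_ne_top.mpr (cube_volume_ne_top hQ)))))
            (hMint.mono_set Set.diff_subset) (hQm.diff hPm) hMQ
        rwa [setIntegral_const, smul_eq_mul, measureReal_def, hvd] at h1
      have hAQ : intOn σ Q = vol Q * avgOn Q σ := by
        rw [intOn, avgOn, ← mul_assoc, mul_inv_cancel₀ (cube_vol_pos hQ).ne', one_mul]
      have hexpand : (vol Q - vol P) * avgOn Q σ = vol Q * avgOn Q σ - vol P * avgOn Q σ := by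
        ring
      have h5 : vol P * avgOn P σ ≤ vol P * avgOn Q σ := by linarith
      exact le_of_mul_le_mul_left h5 hvolP
    obtain ⟨c, R, hR, hQeq⟩ := id hQ
    have hsph : volume (Metric.sphere c R) = 0 :=
      Measure.addHaar_sphere_of_ne_zero (μ := (volume : Measure (Rn n))) c (ne_of_gt hR)
    have hdiff : ∀ᵐ x ∂(volume.restrict Q), σ x ≤ avgOn Q σ := by
      rw [ae_restrict_iff' hQm]
      have h1 : ∀ᵐ x ∂(volume : Measure (Rn n)),
          Tendsto (fun r => ⨍ y in closedBall x r, σ y) (𝓝[>] 0) (𝓝 (σ x)) := by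
        filter_upwards [IsUnifLocDoublingMeasure.ae_tendsto_average
          (volume : Measure (Rn n)) hσl 1] with x hx
        refine hx (fun _ => x) id tendsto_id ?_
        filter_upwards [self_mem_nhdsWithin] with r hr
        simpa using mem_closedBall_self (x := x) (le_of_lt (Set.mem_Ioi.mp hr))
      have h2 : ∀ᵐ x ∂(volume : Measure (Rn n)), x ∉ Metric.sphere c R := by
        rw [ae_iff]
        simpa only [not_not, Set.setOf_mem_eq] using hsph
      filter_upwards [h1, h2] with x hx hxs hxQ
      have hxcR : dist x c ≤ R := by rw [hQeq] at hxQ; exact mem_closedBall.mp hxQ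
      have hdc : dist x c < R := lt_of_le_of_ne hxcR (by simpa only [Metric.mem_sphere] using hxs)
      have hρ0 : 0 < R - dist x c := by linarith
      refine le_of_tendsto hx ?_
      filter_upwards [Ioc_mem_nhdsGT_of_mem (Set.left_mem_Ico.mpr hρ0)] with r hr
      have hrr : 0 < r := hr.1
      have hsubQ : closedBall x r ⊆ Q := by
        rw [hQeq]
        exact closedBall_subset_closedBall' (by linarith [hr.2])
      have havg : ⨍ y in closedBall x r, σ y = avgOn (closedBall x r) σ := by
        rw [setAverage_eq, avgOn, vol, smul_eq_mul, measureReal_def]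
      rw [havg]
      exact hsub _ ⟨x, r, hrr, rfl⟩ hsubQ
    have hwinv : ∀ x, (w x)⁻¹ = σ x ^ (p - 1) := by
      intro x
      rw [hσdef]
      show (w x)⁻¹ = (w x ^ (-(p - 1)⁻¹)) ^ (p - 1)
      rw [← Real.rpow_mul (hw0 x)]
      rw [show (-(p-1)⁻¹ * (p-1)) = (-1 : ℝ) by field_simp]
      exact (Real.rpow_neg_one (w x)).symm
    have heA : e ≤ (avgOn Q σ) ^ (p - 1) := by
      have hev : ∀ᵐ x ∂(volume.restrict Q), (fun x => (w x)⁻¹) x ≤ (avgOn Q σ) ^ (p-1) := by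
        filter_upwards [hdiff] with x hx
        rw [hwinv x]
        exact Real.rpow_le_rpow (hσ0 x) hx (by linarith)
      have hcob : IsCoboundedUnder (· ≤ ·) (ae (volume.restrict Q)) (fun x => (w x)⁻¹) :=
        IsBoundedUnder.isCoboundedUnder_le
          ⟨0, eventually_map.mpr (ae_of_all _ fun x => inv_nonneg.mpr (hw0 x))⟩
      exact limsup_le_of_le hcob hev
    calc avgOn Q w * e ≤ avgOn Q w * (avgOn Q σ) ^ (p-1) :=
          mul_le_mul_of_nonneg_left heA havgw
      _ = apRatio p w Q := (hapRatio Q hQ).symm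
      _ ≤ apConst p w := hle_const Q hQ
      _ ≤ (2*F)^(p-1) * apConst p w := le_mul_of_one_le_left hapC (by
            calc (1:ℝ) = 1 ^ (p-1) := (Real.one_rpow _).symm
              _ ≤ (2*F)^(p-1) := Real.rpow_le_rpow zero_le_one h2F (by linarith))
  · -- Fujii–Wilson constant greater than 1
    set K := (2:ℝ)^(n+1) * (F - 1) with hKdef
    have hK0 : 0 < K := mul_pos (by positivity) (by linarith)
    have hεval : ε = (p-1)/(K+1) := hε
    have hε0 : 0 ≤ ε := by rw [hεval]; exact div_nonneg (by linarith) (by linarith)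
    have hq : p - ε - 1 = (p-1) * K / (K+1) := by
      rw [hεval]; field_simp; ring
    have hq0 : 0 < p - ε - 1 := by
      rw [hq]
      have : 0 < (p-1) * K := mul_pos (by linarith) hK0
      positivity
    have hqne : p - ε ≠ 1 := by
      intro h
      rw [h] at hq0
      norm_num at hq0
    have hrh := hRH Q hQ K⁻¹ (inv_nonneg.mpr hK0.le) (by rw [one_div])
    have hexp : (-(p - ε - 1)⁻¹) = (-(p-1)⁻¹) * (1 + K⁻¹) := by
      rw [hq]
      field_simp
    have hfun : (fun x => w x ^ (-(p - ε - 1)⁻¹)) = fun x => σ x ^ (1 + K⁻¹) := by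
      funext x
      rw [hσdef]
      show w x ^ (-(p - ε - 1)⁻¹) = (w x ^ (-(p - 1)⁻¹)) ^ (1 + K⁻¹)
      rw [hexp, Real.rpow_mul (hw0 x)]
    have hpow : (1 + K⁻¹) * (p - ε - 1) = p - 1 := by
      rw [hq]
      field_simp
    rw [apRatio, if_neg hqne, hfun]
    have hτ0 : 0 ≤ avgOn Q (fun x => σ x ^ (1 + K⁻¹)) :=
      avg_nonneg (fun x => Real.rpow_nonneg (hσ0 x) _)
    have key : (avgOn Q (fun x => σ x ^ (1 + K⁻¹))) ^ (p - ε - 1)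
        ≤ (2*F) ^ (p - ε - 1) * (avgOn Q σ) ^ (p - 1) := by
      calc (avgOn Q (fun x => σ x ^ (1 + K⁻¹))) ^ (p - ε - 1)
          ≤ (2*F*(avgOn Q σ)^(1+K⁻¹)) ^ (p - ε - 1) :=
            Real.rpow_le_rpow hτ0 hrh hq0.le
        _ = (2*F)^(p-ε-1) * ((avgOn Q σ)^(1+K⁻¹))^(p-ε-1) :=
            Real.mul_rpow (by linarith) (Real.rpow_nonneg havgσ _)
        _ = (2*F)^(p-ε-1) * (avgOn Q σ)^((1+K⁻¹)*(p-ε-1)) := by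
            rw [← Real.rpow_mul havgσ]
        _ = _ := by rw [hpow]
    calc avgOn Q w * (avgOn Q (fun x => σ x ^ (1+K⁻¹)))^(p-ε-1)
        ≤ avgOn Q w * ((2*F)^(p-ε-1) * (avgOn Q σ)^(p-1)) :=
          mul_le_mul_of_nonneg_left key havgw
      _ = (2*F)^(p-ε-1) * apRatio p w Q := by rw [hapRatio Q hQ]; ring
      _ ≤ (2*F)^(p-1) * apConst p w := by
          refine mul_le_mul ?_ (hle_const Q hQ) hapQ (Real.rpow_nonneg (by linarith) _)
          exact Real.rpow_le_rpow_of_exponent_le h2F (by linarith)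

end Stmt5Aux

/-- Left-openness of the `A_p` classes: if `w ∈ A_p` and the dual weight
`σ = w^(1-p')` is in `A_∞`, then with `ε = (p-1)/(2^(n+1)([σ]_{A∞}-1)+1)` one has
`w ∈ A_(p-ε)` with constant at most `(2[σ]_{A∞})^(p-1) [w]_{A_p}`; one may assume
the sharp reverse Hölder inequality for `σ`. -/
theorem stmt5 {n : ℕ} (p : ℝ) (hp : 1 < p) (w : Rn n → ℝ) (hw0 : ∀ x, 0 ≤ w x)
    (hwl : LocallyIntegrable w volume)
    (σ : Rn n → ℝ) (hσdef : σ = fun x => w x ^ (-(p - 1)⁻¹))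
    (hσl : LocallyIntegrable σ volume)
    (hpos : ∀ Q : Set (Rn n), IsCube Q → 0 < intOn w Q)
    (hσpos : ∀ Q : Set (Rn n), IsCube Q → 0 < intOn σ Q)
    (hap : BddAbove (apSet p w))
    (hfw : BddAbove (fwSet σ)) (hfw1 : 1 ≤ fujiiWilson σ)
    (hRH : ∀ Q : Set (Rn n), IsCube Q → ∀ δ : ℝ, 0 ≤ δ →
      δ ≤ 1 / ((2 : ℝ) ^ (n + 1) * (fujiiWilson σ - 1)) →
      avgOn Q (fun x => σ x ^ (1 + δ)) ≤ 2 * fujiiWilson σ * (avgOn Q σ) ^ (1 + δ))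
    (ε : ℝ) (hε : ε = (p - 1) / ((2 : ℝ) ^ (n + 1) * (fujiiWilson σ - 1) + 1)) :
    ∀ Q : Set (Rn n), IsCube Q →
      apRatio (p - ε) w Q ≤ (2 * fujiiWilson σ) ^ (p - 1) * apConst p w :=
  Stmt5Aux.main p hp w hw0 hwl σ hσdef hσl hpos hσpos hap hfw hfw1 hRH ε hε
end
end

section
/- Let w be a weight (nonnegative locally integrable, positive a.e.) on ℝⁿ with logarithmic A_∞ constant [w]_{A_∞}^{log} := sup_Q (1/w(Q)) ∫_Q (1 + log⁺(w(x)/w_Q)) w(x) dx < ∞, where w_Q = (1/|Q|)∫_Q w. Then log w belongs to weighted BMO with ‖log w‖_{BMO_w} ≤ 8([w]_{A_∞}^{log} - 1), where ‖f‖_{BMO_w} = sup_Q (1/w(Q)) ∫_Q |f - f_{Q,w}| w dx and f_{Q,w} = (1/w(Q))∫_Q f w dx. -/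
open MeasureTheory Real

noncomputable section

/-- If the logarithmic `A_∞` constant of a weight `w` is finite, then `log w`
belongs to weighted `BMO` with `‖log w‖_{BMO_w} ≤ 8([w]^{log}_{A∞} - 1)`. -/
theorem stmt6 {n : ℕ} (w : Rn n → ℝ) (hw0 : ∀ x, 0 ≤ w x)
    (hwpos : ∀ᵐ x ∂(volume : Measure (Rn n)), 0 < w x)
    (hwl : LocallyIntegrable w volume)
    (hpos : ∀ Q : Set (Rn n), IsCube Q → 0 < intOn w Q)
    (hlogint : ∀ Q : Set (Rn n), IsCube Q →
      IntegrableOn (fun x => Real.log (w x) * w x) Q volume)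
    (hbdd : BddAbove (logAinfSet w)) :
    ∀ Q : Set (Rn n), IsCube Q →
      (intOn w Q)⁻¹ *
          (∫ x in Q, |Real.log (w x) - wavgOn w Q (fun y => Real.log (w y))| * w x)
        ≤ 8 * (logAinf w - 1) := by
  intro Q hQ
  obtain ⟨c0, r, hr, hQeq⟩ := hQ
  have hQc : IsCube Q := ⟨c0, r, hr, hQeq⟩
  have hvolpos : 0 < volume Q := by
    rw [hQeq]
    exact lt_of_lt_of_le (Metric.measure_ball_pos volume c0 hr)
      (measure_mono Metric.ball_subset_closedBall)
  have hvoltop : volume Q < ⊤ := by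
    rw [hQeq]; exact (isCompact_closedBall c0 r).measure_lt_top
  have hV : 0 < vol Q := ENNReal.toReal_pos hvolpos.ne' hvoltop.ne
  set W := intOn w Q with hWdef
  have hW : 0 < W := hpos Q hQc
  have hWint : (∫ x in Q, w x) = W := rfl
  have hwint : IntegrableOn w Q volume := by
    apply hwl.integrableOn_isCompact
    rw [hQeq]; exact isCompact_closedBall c0 r
  set m := avgOn Q w with hmdef
  have hm : 0 < m := by
    have hmv : m = (vol Q)⁻¹ * W := rfl
    rw [hmv]; positivity
  have hfw : IntegrableOn (fun x => Real.log (w x) * w x) Q volume := hlogint Q hQc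
  set c := Real.log m with hcdef
  have hwm : AEMeasurable w (volume.restrict Q) := hwint.aemeasurable
  have hposQ : ∀ᵐ x ∂(volume.restrict Q), 0 < w x := ae_restrict_of_ae hwpos
  set g := fun x => max (Real.log (w x / m)) 0 * w x with hgdef
  have hgm : AEStronglyMeasurable g (volume.restrict Q) :=
    (((Real.measurable_log.comp_aemeasurable (hwm.div_const m)).max
      aemeasurable_const).mul hwm).aestronglyMeasurable
  have hdom : Integrable (fun x => |Real.log (w x) * w x| + |c| * w x) (volume.restrict Q) :=
    hfw.abs.add (hwint.const_mul _)
  have hgint : Integrable g (volume.restrict Q) := by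
    apply hdom.mono' hgm
    filter_upwards [hposQ] with x hx
    rw [Real.norm_eq_abs, hgdef]
    have h0 : (0:ℝ) ≤ max (Real.log (w x / m)) 0 := le_max_right _ _
    rw [abs_mul, abs_of_nonneg (hw0 x), abs_of_nonneg h0]
    have h1 : max (Real.log (w x / m)) 0 ≤ |Real.log (w x)| + |c| := by
      rw [Real.log_div hx.ne' hm.ne']
      calc max (Real.log (w x) - c) 0 ≤ |Real.log (w x) - c| := max_le (le_abs_self _) (abs_nonneg _)
        _ ≤ |Real.log (w x)| + |c| := abs_sub _ _
    calc max (Real.log (w x / m)) 0 * w x ≤ (|Real.log (w x)| + |c|) * w x :=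
          mul_le_mul_of_nonneg_right h1 (hw0 x)
      _ = |Real.log (w x) * w x| + |c| * w x := by
          rw [abs_mul, abs_of_nonneg (hw0 x)]; ring
  -- key inequality from the sup
  have hle : W⁻¹ * ∫ x in Q, (1 + max (Real.log (w x / m)) 0) * w x ≤ logAinf w :=
    le_csSup hbdd ⟨Q, hQc, rfl⟩
  have hsplit : (∫ x in Q, (1 + max (Real.log (w x / m)) 0) * w x) = W + ∫ x in Q, g x := by
    have heq : ∀ x, (1 + max (Real.log (w x / m)) 0) * w x = w x + g x := by
      intro x; rw [hgdef]; ring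
    simp_rw [heq]
    rw [integral_add hwint hgint, hWdef, intOn]
  rw [hsplit] at hle
  set Ig := ∫ x in Q, g x with hIgdef
  have hIgnn : 0 ≤ Ig :=
    integral_nonneg fun x => mul_nonneg (le_max_right _ _) (hw0 x)
  have hWone : W * W⁻¹ = 1 := mul_inv_cancel₀ hW.ne'
  have hA1 : 1 ≤ logAinf w := by
    refine le_trans ?_ hle
    rw [mul_add, inv_mul_cancel₀ hW.ne']
    nlinarith [mul_nonneg (inv_nonneg.mpr hW.le) hIgnn]
  have hIg : W + Ig ≤ logAinf w * W := by
    have h2 := mul_le_mul_of_nonneg_left hle hW.le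
    calc W + Ig = W * (W⁻¹ * (W + Ig)) := by rw [← mul_assoc, hWone, one_mul]
      _ ≤ W * logAinf w := h2
      _ = logAinf w * W := mul_comm _ _
  -- integrability of (log w - c) * w
  have hfcint : Integrable (fun x => (Real.log (w x) - c) * w x) (volume.restrict Q) := by
    have : ∀ x, (Real.log (w x) - c) * w x = Real.log (w x) * w x - c * w x := fun x => by ring
    simp_rw [this]
    exact hfw.sub (hwint.const_mul c)
  -- J := ∫ (log w - c) w ≥ 0
  have hJ : 0 ≤ ∫ x in Q, (Real.log (w x) - c) * w x := by
    have hle2 : ∀ᵐ x ∂(volume.restrict Q), (c - Real.log (w x)) * w x ≤ m - w x := by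
      filter_upwards [hposQ] with x hx
      have hlog : Real.log (m / w x) ≤ m / w x - 1 :=
        Real.log_le_sub_one_of_pos (div_pos hm hx)
      have heq : c - Real.log (w x) = Real.log (m / w x) := by
        rw [Real.log_div hm.ne' hx.ne']
      calc (c - Real.log (w x)) * w x = Real.log (m / w x) * w x := by rw [heq]
        _ ≤ (m / w x - 1) * w x := mul_le_mul_of_nonneg_right hlog (hw0 x)
        _ = m - w x := by field_simp
    have hcint : Integrable (fun _ : Rn n => m) (volume.restrict Q) :=
      integrableOn_const hvoltop.ne
    have hint2 : ∫ x in Q, (c - Real.log (w x)) * w x ≤ ∫ x in Q, (m - w x) := by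
      apply integral_mono_ae _ (hcint.sub hwint) hle2
      have : ∀ x, (c - Real.log (w x)) * w x = -((Real.log (w x) - c) * w x) := fun x => by ring
      simp_rw [this]
      exact hfcint.neg
    have hconst : ∫ x in Q, (m - w x) = 0 := by
      rw [integral_sub hcint hwint, setIntegral_const, smul_eq_mul, hmdef, avgOn]
      have : volume.real Q = vol Q := rfl
      rw [this]
      field_simp
      ring
    have hneg : ∫ x in Q, (c - Real.log (w x)) * w x
        = -∫ x in Q, (Real.log (w x) - c) * w x := by
      rw [← integral_neg]
      congr 1; funext x; ring
    rw [hneg, hconst] at hint2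
    linarith
  -- |t| = 2 max(t,0) - t
  have habs : ∫ x in Q, |Real.log (w x) - c| * w x
      = 2 * Ig - ∫ x in Q, (Real.log (w x) - c) * w x := by
    have hgeq2 : (fun x => |Real.log (w x) - c| * w x)
        =ᵐ[volume.restrict Q] fun x => 2 * g x - (Real.log (w x) - c) * w x := by
      filter_upwards [hposQ] with x hx
      have hlg : Real.log (w x / m) = Real.log (w x) - c := Real.log_div hx.ne' hm.ne'
      rw [hgdef]
      simp only [hlg]
      have habs2 : |Real.log (w x) - c| = 2 * max (Real.log (w x) - c) 0 - (Real.log (w x) - c) := by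
        rcases le_or_gt 0 (Real.log (w x) - c) with h | h
        · rw [abs_of_nonneg h, max_eq_left h]; ring
        · rw [abs_of_neg h, max_eq_right h.le]; ring
      rw [habs2]; ring
    rw [integral_congr_ae hgeq2, integral_sub (hgint.const_mul 2) hfcint,
      integral_const_mul _ _, hIgdef]
  set b := wavgOn w Q (fun y => Real.log (w y)) with hbdef
  -- integrability helpers
  have hfbkey : ∀ x, |Real.log (w x) - b| * w x = |(Real.log (w x) - b) * w x| := by
    intro x; rw [abs_mul, abs_of_nonneg (hw0 x)]
  have hfckey : ∀ x, |Real.log (w x) - c| * w x = |(Real.log (w x) - c) * w x| := by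
    intro x; rw [abs_mul, abs_of_nonneg (hw0 x)]
  have hfbint : Integrable (fun x => (Real.log (w x) - b) * w x) (volume.restrict Q) := by
    have : ∀ x, (Real.log (w x) - b) * w x = Real.log (w x) * w x - b * w x := fun x => by ring
    simp_rw [this]
    exact hfw.sub (hwint.const_mul b)
  -- center change: |c - b| * W ≤ ∫ |log w - c| w
  have hIc : ∫ x in Q, (Real.log (w x) - c) * w x = W * (b - c) := by
    have hsub : ∀ x, (Real.log (w x) - c) * w x = Real.log (w x) * w x - c * w x := fun x => by ring
    simp_rw [hsub]
    rw [integral_sub hfw (hwint.const_mul c), integral_const_mul _ _]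
    have hbW : ∫ x in Q, Real.log (w x) * w x = W * b := by
      rw [hbdef, wavgOn, ← hWdef, ← mul_assoc, hWone, one_mul]
    rw [hbW, hWint]
    ring
  have hcb : |b - c| * W ≤ ∫ x in Q, |Real.log (w x) - c| * w x := by
    have h1 : |∫ x in Q, (Real.log (w x) - c) * w x| ≤ ∫ x in Q, |(Real.log (w x) - c) * w x| := by
      simpa only [Real.norm_eq_abs] using
        norm_integral_le_integral_norm (μ := volume.restrict Q)
          (fun x => (Real.log (w x) - c) * w x)
    rw [hIc, abs_mul, abs_of_nonneg hW.le, mul_comm] at h1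
    simp_rw [hfckey]
    exact h1
  -- step 1: triangle
  have hstep1 : ∫ x in Q, |Real.log (w x) - b| * w x
      ≤ (∫ x in Q, |Real.log (w x) - c| * w x) + |c - b| * W := by
    have hrhsint : Integrable (fun x => |(Real.log (w x) - c) * w x| + |c - b| * w x)
        (volume.restrict Q) := hfcint.abs.add (hwint.const_mul _)
    have hmono : ∫ x in Q, |(Real.log (w x) - b) * w x|
        ≤ ∫ x in Q, (|(Real.log (w x) - c) * w x| + |c - b| * w x) := by
      apply integral_mono hfbint.abs hrhsint
      intro x
      calc |(Real.log (w x) - b) * w x| = |Real.log (w x) - b| * w x := (hfbkey x).symm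
        _ ≤ (|Real.log (w x) - c| + |c - b|) * w x := by
            apply mul_le_mul_of_nonneg_right _ (hw0 x)
            calc |Real.log (w x) - b| = |(Real.log (w x) - c) + (c - b)| := by ring_nf
              _ ≤ |Real.log (w x) - c| + |c - b| := abs_add_le _ _
        _ = |(Real.log (w x) - c) * w x| + |c - b| * w x := by
            rw [← hfckey x]; ring
    rw [integral_add hfcint.abs (hwint.const_mul _), integral_const_mul _ _, hWint] at hmono
    simp_rw [hfbkey, hfckey]
    exact hmono
  have hcb' : |c - b| * W ≤ ∫ x in Q, |Real.log (w x) - c| * w x := by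
    rw [abs_sub_comm]; exact hcb
  -- assemble
  set I2 := ∫ x in Q, |Real.log (w x) - c| * w x with hI2def
  have hI1 : ∫ x in Q, |Real.log (w x) - b| * w x ≤ 2 * I2 := by
    calc ∫ x in Q, |Real.log (w x) - b| * w x ≤ I2 + |c - b| * W := hstep1
      _ ≤ I2 + I2 := by linarith [hcb']
      _ = 2 * I2 := by ring
  have hI2b : I2 ≤ 2 * (logAinf w - 1) * W := by
    rw [habs]
    nlinarith [hJ, hIg]
  have hI1b : ∫ x in Q, |Real.log (w x) - b| * w x ≤ 4 * (logAinf w - 1) * W := by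
    nlinarith [hI1, hI2b]
  calc W⁻¹ * ∫ x in Q, |Real.log (w x) - b| * w x
      ≤ W⁻¹ * (4 * (logAinf w - 1) * W) :=
        mul_le_mul_of_nonneg_left hI1b (inv_nonneg.mpr hW.le)
    _ = 4 * (logAinf w - 1) := by field_simp
    _ ≤ 8 * (logAinf w - 1) := by nlinarith [hA1]
end
end

section
/- Let w be a nonnegative integrable function on a cube Q with w(Q) = ∫_Q w > 0, and let w_Q = (1/|Q|)∫_Q w. Then (1/w(Q)) ∫_Q |log w(x) - (log w)_{Q,w}| w(x) dx ≤ (8/w(Q)) ∫_Q log⁺(w(x)/w_Q) w(x) dx, where (log w)_{Q,w} = (1/w(Q))∫_Q (log w) w dx. -/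
open MeasureTheory Real

noncomputable section

/-- Local estimate: for a nonnegative integrable `w` on a cube `Q` with `w(Q) > 0`,
the weighted oscillation of `log w` is controlled by `8` times the weighted
integral of `log⁺(w/w_Q)`. -/
theorem stmt7 {n : ℕ} (Q : Set (Rn n)) (hQ : IsCube Q) (w : Rn n → ℝ)
    (hw0 : ∀ x, 0 ≤ w x) (hwint : IntegrableOn w Q volume) (hpos : 0 < intOn w Q)
    (hlogint : IntegrableOn (fun x => Real.log (w x) * w x) Q volume) :
    (intOn w Q)⁻¹ *
        (∫ x in Q, |Real.log (w x) - wavgOn w Q (fun y => Real.log (w y))| * w x)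
      ≤ 8 * ((intOn w Q)⁻¹ * ∫ x in Q, max (Real.log (w x / avgOn Q w)) 0 * w x) := by
  -- basic facts about the cube
  have hfin : volume Q < ⊤ := by
    obtain ⟨c, r, hr, rfl⟩ := hQ
    exact (isCompact_closedBall c r).measure_lt_top
  have hvolpos : 0 < vol Q := by
    obtain ⟨c, r, hr, rfl⟩ := hQ
    exact ENNReal.toReal_pos (Metric.measure_closedBall_pos volume c hr).ne'
      ((isCompact_closedBall c r).measure_lt_top).ne
  set wQ := avgOn Q w with hwQdef
  have hwQpos : 0 < wQ := mul_pos (inv_pos.2 hvolpos) hpos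
  set L := wavgOn w Q (fun y => Real.log (w y)) with hLdef
  set I := ∫ x in Q, Real.log (w x) * w x with hIdef
  have hLI : L = (intOn w Q)⁻¹ * I := rfl
  -- Jensen-type inequality : log wQ ≤ L
  have hle : Real.log wQ ≤ L := by
    have hptw : ∀ x, Real.log wQ * w x - Real.log (w x) * w x ≤ wQ - w x := by
      intro x
      rcases eq_or_lt_of_le (hw0 x) with h0 | h0
      · simp [← h0, hwQpos.le]
      · have hdiv : 0 < wQ / w x := div_pos hwQpos h0
        have h1 := Real.log_le_sub_one_of_pos hdiv
        rw [Real.log_div hwQpos.ne' h0.ne'] at h1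
        have h2 := mul_le_mul_of_nonneg_right h1 (hw0 x)
        rw [sub_mul, sub_mul, div_mul_cancel₀ _ h0.ne', one_mul] at h2
        exact h2
    have hint1 : IntegrableOn (fun x => Real.log wQ * w x) Q volume := hwint.const_mul _
    have hintc : IntegrableOn (fun _ => wQ) Q volume :=
      integrableOn_const hfin.ne
    have key : (∫ x in Q, (Real.log wQ * w x - Real.log (w x) * w x)) ≤
        ∫ x in Q, (wQ - w x) :=
      integral_mono (hint1.sub hlogint) (hintc.sub hwint) (fun x => hptw x)
    rw [integral_sub hint1 hlogint, integral_sub hintc hwint, integral_const_mul,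
      setIntegral_const] at key
    have hcv : volume.real Q • wQ = intOn w Q := by
      show vol Q * wQ = intOn w Q
      rw [hwQdef]
      show vol Q * ((vol Q)⁻¹ * intOn w Q) = intOn w Q
      field_simp
    rw [hcv] at key
    have key2 : Real.log wQ * intOn w Q ≤ I := by
      have : (∫ x in Q, w x) = intOn w Q := rfl
      rw [this] at key; linarith
    rw [hLI]
    calc Real.log wQ = Real.log wQ * intOn w Q * (intOn w Q)⁻¹ := by
          field_simp
      _ ≤ I * (intOn w Q)⁻¹ := by
          exact mul_le_mul_of_nonneg_right key2 (inv_nonneg.2 hpos.le)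
      _ = (intOn w Q)⁻¹ * I := mul_comm _ _
  -- integrabilities
  have hsub : IntegrableOn (fun x => (Real.log (w x) - L) * w x) Q volume := by
    have h := hlogint.sub (hwint.const_mul L)
    simpa [sub_mul, Pi.sub_def] using h
  have hsub2 : IntegrableOn (fun x => (Real.log (w x) - Real.log wQ) * w x) Q volume := by
    have h := hlogint.sub (hwint.const_mul (Real.log wQ))
    simpa [sub_mul, Pi.sub_def] using h
  have hpos1 : IntegrableOn (fun x => max (Real.log (w x) - L) 0 * w x) Q volume := by
    have h := hsub.pos_part
    have e : (fun x => max ((Real.log (w x) - L) * w x) 0) =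
        fun x => max (Real.log (w x) - L) 0 * w x := by
      funext x; rw [max_mul_of_nonneg _ _ (hw0 x), zero_mul]
    rwa [e] at h
  have hpos2 : IntegrableOn (fun x => max (Real.log (w x) - Real.log wQ) 0 * w x) Q volume := by
    have h := hsub2.pos_part
    have e : (fun x => max ((Real.log (w x) - Real.log wQ) * w x) 0) =
        fun x => max (Real.log (w x) - Real.log wQ) 0 * w x := by
      funext x; rw [max_mul_of_nonneg _ _ (hw0 x), zero_mul]
    rwa [e] at h
  -- ∫ (log w - L) w = 0
  have hzero : (∫ x in Q, (Real.log (w x) - L) * w x) = 0 := by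
    have e : (∫ x in Q, (Real.log (w x) - L) * w x) = I - L * intOn w Q := by
      have e2 : (fun x => (Real.log (w x) - L) * w x) =
          fun x => Real.log (w x) * w x - L * w x := by funext x; ring
      rw [e2, integral_sub hlogint (hwint.const_mul L), integral_const_mul]
      rfl
    rw [e, hLI]; field_simp; ring
  -- absolute value identity
  have habs_eq : (∫ x in Q, |Real.log (w x) - L| * w x) =
      2 * ∫ x in Q, max (Real.log (w x) - L) 0 * w x := by
    have e : (fun x => |Real.log (w x) - L| * w x) =
        fun x => 2 * (max (Real.log (w x) - L) 0 * w x) - (Real.log (w x) - L) * w x := by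
      funext x
      rcases le_total (Real.log (w x) - L) 0 with h | h
      · rw [abs_of_nonpos h, max_eq_right h]; ring
      · rw [abs_of_nonneg h, max_eq_left h]; ring
    rw [e, integral_sub (hpos1.const_mul 2) hsub, integral_const_mul, hzero, sub_zero]
  -- positive part comparison
  have hmono : (∫ x in Q, max (Real.log (w x) - L) 0 * w x) ≤
      ∫ x in Q, max (Real.log (w x) - Real.log wQ) 0 * w x := by
    refine integral_mono hpos1 hpos2 (fun x => ?_)
    exact mul_le_mul_of_nonneg_right
      (max_le_max (sub_le_sub_left hle _) le_rfl) (hw0 x)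
  -- identify the RHS integrand
  have hR : (∫ x in Q, max (Real.log (w x / wQ)) 0 * w x) =
      ∫ x in Q, max (Real.log (w x) - Real.log wQ) 0 * w x := by
    congr 1; funext x
    rcases eq_or_lt_of_le (hw0 x) with h0 | h0
    · rw [← h0, mul_zero, mul_zero]
    · rw [Real.log_div h0.ne' hwQpos.ne']
  have hBnn : 0 ≤ ∫ x in Q, max (Real.log (w x / wQ)) 0 * w x :=
    integral_nonneg (fun x => mul_nonneg (le_max_right _ _) (hw0 x))
  have hAB : (∫ x in Q, max (Real.log (w x) - L) 0 * w x) ≤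
      ∫ x in Q, max (Real.log (w x / wQ)) 0 * w x := by rw [hR]; exact hmono
  have hiv : (0:ℝ) ≤ (intOn w Q)⁻¹ := inv_nonneg.2 hpos.le
  rw [habs_eq]
  set A := ∫ x in Q, max (Real.log (w x) - L) 0 * w x
  set B := ∫ x in Q, max (Real.log (w x / wQ)) 0 * w x
  nlinarith [mul_le_mul_of_nonneg_left hAB hiv, mul_nonneg hiv hBnn]
end
end

section
/- Let w ∈ A_∞ on ℝⁿ. Then the logarithmic A_∞ constant satisfies [w]_{A_∞}^{log} − 1 ≤ 2ⁿ ([w]_{A_∞} − 1), where [w]_{A_∞}^{log} = sup_Q (1/w(Q)) ∫_Q (1 + log⁺(w/w_Q)) w dx and [w]_{A_∞} = sup_Q (1/w(Q)) ∫_Q M(wχ_Q) dx. -/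
open MeasureTheory Real

noncomputable section

namespace S10
open Set Filter Metric MeasureTheory Topology
open scoped ENNReal NNReal

variable {n : ℕ}

lemma floor_div_int' (a : ℝ) (m : ℤ) (hm : 0 < m) : ⌊a / (m : ℝ)⌋ = ⌊a⌋ / m := by
  have hm' : (0:ℝ) < (m:ℝ) := by exact_mod_cast hm
  rw [Int.floor_eq_iff]
  constructor
  · rw [le_div_iff₀ hm']
    have h1 : (⌊a⌋ / m) * m ≤ ⌊a⌋ := Int.ediv_mul_le ⌊a⌋ hm.ne'
    calc ((⌊a⌋ / m : ℤ) : ℝ) * m = ((⌊a⌋ / m * m : ℤ) : ℝ) := by push_cast; ring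
      _ ≤ (⌊a⌋ : ℝ) := by exact_mod_cast h1
      _ ≤ a := Int.floor_le a
  · rw [div_lt_iff₀ hm']
    have h2 : ⌊a⌋ < (⌊a⌋ / m + 1) * m := Int.lt_ediv_add_one_mul_self ⌊a⌋ hm
    have h2' : (⌊a⌋ : ℝ) < ((⌊a⌋ / m + 1) * m : ℤ) := by exact_mod_cast h2
    have := Int.lt_floor_add_one a
    have h3 : (⌊a⌋:ℝ) + 1 ≤ ((⌊a⌋ / m + 1) * m : ℤ) := by
      have : ⌊a⌋ + 1 ≤ (⌊a⌋ / m + 1) * m := h2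
      exact_mod_cast this
    push_cast at h3 ⊢
    linarith [Int.lt_floor_add_one a]

lemma volume_cube (x : Rn n) {ρ : ℝ} (h : 0 ≤ ρ) :
    volume (Metric.closedBall x ρ) = ENNReal.ofReal ((2*ρ)^n) := by
  simpa using Real.volume_pi_closedBall x h

lemma closedBall_eq_pi (x : Rn n) {ρ : ℝ} (h : 0 ≤ ρ) :
    Metric.closedBall x ρ = Set.pi Set.univ (fun i => Set.Icc (x i - ρ) (x i + ρ)) := by
  rw [closedBall_pi x h]
  simp [Real.closedBall_eq_Icc]

lemma vfam_cond (n : ℕ) : ∀ x : Rn n, ∃ᶠ ρ in nhdsWithin (0:ℝ) (Set.Ioi 0),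
    volume (Metric.closedBall x (3 * ρ)) ≤ (((6:ℝ≥0)^n : ℝ≥0) : ℝ≥0∞) * volume (Metric.closedBall x ρ) := by
  intro x
  refine ((eventually_mem_nhdsWithin).mono fun ρ hρ => ?_).frequently
  have hρ : (0:ℝ) < ρ := hρ
  rw [volume_cube x (by positivity : (0:ℝ) ≤ 3*ρ), volume_cube x hρ.le]
  have h6 : (((6:ℝ≥0)^n : ℝ≥0) : ℝ≥0∞) = ENNReal.ofReal ((6:ℝ)^n) := by
    rw [ENNReal.ofReal_pow (by norm_num), ENNReal.coe_pow]
    norm_num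
  rw [h6, ← ENNReal.ofReal_mul (by positivity)]
  apply ENNReal.ofReal_le_ofReal
  calc (2*(3*ρ))^n = (3:ℝ)^n * (2*ρ)^n := by rw [← mul_pow]; ring_nf
    _ ≤ (6:ℝ)^n * (2*ρ)^n := by
        apply mul_le_mul_of_nonneg_right (pow_le_pow_left₀ (by norm_num) (by norm_num) n)
        positivity

def vFam (n : ℕ) : VitaliFamily (volume : Measure (Rn n)) :=
  Vitali.vitaliFamily volume ((6:ℝ≥0) ^ n) (vfam_cond n)

lemma cube_mem_vFam {x z : Rn n} {ρ : ℝ} (hρ : 0 < ρ) (hx : x ∈ Metric.closedBall z ρ) :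
    Metric.closedBall z ρ ∈ (vFam n).setsAt x := by
  refine ⟨Metric.isClosed_closedBall, ?_, 2*ρ, ?_, ?_⟩
  · exact (Metric.nonempty_ball.2 hρ).mono Metric.ball_subset_interior_closedBall
  · intro y hy
    have h1 : dist y z ≤ ρ := Metric.mem_closedBall.1 hy
    have h2 : dist x z ≤ ρ := Metric.mem_closedBall.1 hx
    have := dist_triangle y z x
    rw [Metric.mem_closedBall]
    rw [dist_comm z x] at this
    linarith
  · rw [volume_cube x (by positivity : (0:ℝ) ≤ 3*(2*ρ)), volume_cube z hρ.le]
    have h6 : (((6:ℝ≥0)^n : ℝ≥0) : ℝ≥0∞) = ENNReal.ofReal ((6:ℝ)^n) := by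
      rw [ENNReal.ofReal_pow (by norm_num), ENNReal.coe_pow]
      norm_num
    rw [h6, ← ENNReal.ofReal_mul (by positivity)]
    apply ENNReal.ofReal_le_ofReal
    calc (2*(3*(2*ρ)))^n = (6:ℝ)^n * (2*ρ)^n := by rw [← mul_pow]; ring_nf
      _ ≤ (6:ℝ)^n * (2*ρ)^n := le_refl _

/-- a.e., the set of all cube-averages of `|f|` at `x` is bounded above. -/
lemma ae_bddAbove (f : Rn n → ℝ) (hf : Integrable f volume) :
    ∀ᵐ x, BddAbove {a | ∃ P : Set (Rn n), IsCube P ∧ x ∈ P ∧ a = avgOn P (fun y => |f y|)} := by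
  have hfa : LocallyIntegrable (fun y => |f y|) volume := (hf.abs).locallyIntegrable
  filter_upwards [(vFam n).ae_tendsto_average hfa] with x hx
  have hev : ∀ᶠ a in (vFam n).filterAt x, ⨍ y in a, |f y| ≤ |f x| + 1 :=
    hx.eventually (eventually_le_nhds (lt_add_one _))
  rcases ((vFam n).eventually_filterAt_iff).1 hev with ⟨ε, hε, hev⟩
  refine ⟨max (|f x| + 1) ((ε^n)⁻¹ * ∫ y, |f y|), ?_⟩
  rintro a ⟨P, ⟨z, ρ, hρ, rfl⟩, hxP, rfl⟩
  rcases le_or_gt ρ (ε/2) with hcase | hcase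
  · have hmem := cube_mem_vFam hρ hxP
    have hsub : Metric.closedBall z ρ ⊆ Metric.closedBall x ε := by
      intro y hy
      rw [Metric.mem_closedBall] at *
      have h3 := dist_triangle y z x
      rw [dist_comm z x] at h3
      have h4 := Metric.mem_closedBall.1 hxP
      linarith
    have hle := hev _ hmem hsub
    have havg : ⨍ y in Metric.closedBall z ρ, |f y|
        = avgOn (Metric.closedBall z ρ) (fun y => |f y|) := by
      rw [MeasureTheory.setAverage_eq, measureReal_def]
      simp [avgOn, vol, smul_eq_mul]
    rw [havg] at hle
    exact le_trans hle (le_max_left _ _)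
  · have hvol : vol (Metric.closedBall z ρ) = (2*ρ)^n := by
      rw [vol, volume_cube z hρ.le, ENNReal.toReal_ofReal (by positivity)]
    have hεle : ε ^ n ≤ (2*ρ)^n := pow_le_pow_left₀ hε.le (by linarith) n
    have hI : ∫ y in Metric.closedBall z ρ, |f y| ≤ ∫ y, |f y| :=
      setIntegral_le_integral hf.abs (Eventually.of_forall fun y => abs_nonneg _)
    have h0 : 0 ≤ ∫ y in Metric.closedBall z ρ, |f y| :=
      setIntegral_nonneg measurableSet_closedBall fun y _ => abs_nonneg _
    have hfin : avgOn (Metric.closedBall z ρ) (fun y => |f y|) ≤ (ε^n)⁻¹ * ∫ y, |f y| := by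
      rw [avgOn, hvol]
      apply mul_le_mul _ hI h0 (by positivity)
      exact inv_anti₀ (by positivity) hεle
    exact le_trans hfin (le_max_right _ _)

lemma maximal_ge {f : Rn n → ℝ} {x : Rn n}
    (hB : BddAbove {a | ∃ P : Set (Rn n), IsCube P ∧ x ∈ P ∧ a = avgOn P (fun y => |f y|)})
    {P : Set (Rn n)} (hP : IsCube P) (hx : x ∈ P) :
    avgOn P (fun y => |f y|) ≤ maximalFn f x :=
  le_csSup hB ⟨P, hP, hx, rfl⟩

section Dyadic

variable (c : Rn n) (r : ℝ)

def sk (r : ℝ) (k : ℕ) : ℝ := 2*r/2^k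
def adr (k : ℕ) (x : Rn n) : Fin n → ℤ := fun i => ⌊(x i - (c i - r)) / sk r k⌋
def dcube (k : ℕ) (m : Fin n → ℤ) : Set (Rn n) := {y | adr c r k y = m}
def dcl (k : ℕ) (m : Fin n → ℤ) : Set (Rn n) :=
  Metric.closedBall (fun i => (c i - r) + sk r k * m i + sk r k / 2) (sk r k / 2)

variable {c r}
variable (hr : 0 < r)
include hr

lemma sk_pos (k : ℕ) : 0 < sk r k := by
  have : (0:ℝ) < 2^k := by positivity
  simp only [sk]; positivity

lemma sk_succ (k : ℕ) : sk r (k+1) = sk r k / 2 := by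
  simp only [sk, pow_succ]; ring

lemma dcube_eq_pi (k : ℕ) (m : Fin n → ℤ) :
    dcube c r k m =
      Set.pi Set.univ (fun i => Set.Ico ((c i - r) + sk r k * m i) ((c i - r) + sk r k * (m i + 1))) := by
  have hs := sk_pos hr (k := k)
  ext y
  simp only [dcube, Set.mem_setOf_eq, Set.mem_pi, Set.mem_univ, true_implies, Set.mem_Ico,
    funext_iff, adr]
  refine forall_congr' fun i => ?_
  rw [Int.floor_eq_iff, le_div_iff₀ hs, div_lt_iff₀ hs]
  constructor
  · rintro ⟨h1, h2⟩
    push_cast at h1 h2 ⊢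
    constructor <;> nlinarith
  · rintro ⟨h1, h2⟩
    push_cast at h1 h2 ⊢
    constructor <;> nlinarith

lemma msble_dcube (k : ℕ) (m : Fin n → ℤ) : MeasurableSet (dcube c r k m) := by
  rw [dcube_eq_pi hr]
  exact MeasurableSet.univ_pi fun i => measurableSet_Ico

lemma volume_dcube (k : ℕ) (m : Fin n → ℤ) :
    volume (dcube c r k m) = ENNReal.ofReal (sk r k ^ n) := by
  rw [dcube_eq_pi hr, Real.volume_pi_Ico]
  have h : ∀ i : Fin n,
      ENNReal.ofReal (((c i - r) + sk r k * (m i + 1)) - ((c i - r) + sk r k * m i))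
        = ENNReal.ofReal (sk r k) := fun i => by ring_nf
  rw [Finset.prod_congr rfl (fun i _ => h i), Finset.prod_const,
    ← ENNReal.ofReal_pow (sk_pos hr k).le]
  simp

lemma mem_adr (k : ℕ) (x : Rn n) : x ∈ dcube c r k (adr c r k x) := rfl

lemma adr_anti {j k : ℕ} (h : j ≤ k) (x : Rn n) (i : Fin n) :
    adr c r j x i = adr c r k x i / ((2:ℤ)^(k-j)) := by
  have h2 : (2:ℝ)^k = 2^j * 2^(k-j) := by rw [← pow_add]; congr 1; omega
  have hkj : sk r j = sk r k * 2^(k-j) := by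
    have hj : (0:ℝ) < 2^j := by positivity
    have hkj' : (0:ℝ) < 2^(k-j) := by positivity
    simp only [sk]; rw [h2, div_mul_eq_mul_div, mul_div_mul_right _ _ hkj'.ne']
  have key : (x i - (c i - r)) / sk r j
      = ((x i - (c i - r)) / sk r k) / (((2:ℤ)^(k-j) : ℤ) : ℝ) := by
    push_cast
    rw [div_div, ← hkj]
  simp only [adr]
  rw [key, floor_div_int' _ _ (by positivity)]

lemma dcube_nested {j k : ℕ} (h : j ≤ k) (x y : Rn n)
    (hy : y ∈ dcube c r k (adr c r k x)) : adr c r j y = adr c r j x := by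
  funext i
  rw [adr_anti hr h, adr_anti hr h x i, show adr c r k y = adr c r k x from hy]

lemma dcl_eq_pi (k : ℕ) (m : Fin n → ℤ) :
    dcl c r k m =
      Set.pi Set.univ (fun i => Set.Icc ((c i - r) + sk r k * m i) ((c i - r) + sk r k * (m i + 1))) := by
  have hs := sk_pos hr (k := k)
  ext y
  rw [dcl, closedBall_eq_pi _ (half_pos hs).le]
  simp only [Set.mem_pi, Set.mem_univ, true_implies, Set.mem_Icc]
  refine forall_congr' fun i => ?_
  constructor <;> rintro ⟨h1, h2⟩ <;> constructor <;> nlinarith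


lemma dcube_subset_dcl (k : ℕ) (m : Fin n → ℤ) : dcube c r k m ⊆ dcl c r k m := by
  rw [dcube_eq_pi hr, dcl_eq_pi hr]
  exact Set.pi_mono fun i _ => Set.Ico_subset_Icc_self

lemma volume_dcl (k : ℕ) (m : Fin n → ℤ) :
    volume (dcl c r k m) = ENNReal.ofReal (sk r k ^ n) := by
  have h2 : (0:ℝ) ≤ sk r k / 2 := (half_pos (sk_pos hr k)).le
  rw [dcl, volume_cube _ h2]
  congr 1
  congr 1
  ring

lemma restrict_dcl_eq (k : ℕ) (m : Fin n → ℤ) :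
    volume.restrict (dcl c r k m) = volume.restrict (dcube c r k m) := by
  apply Measure.restrict_congr_set
  rw [MeasureTheory.ae_eq_set]
  have hsub := dcube_subset_dcl hr (c := c) k m
  constructor
  · rw [measure_diff hsub (msble_dcube hr k m).nullMeasurableSet
      (by rw [volume_dcube hr]; exact ENNReal.ofReal_ne_top),
      volume_dcl hr, volume_dcube hr, tsub_self]
  · rw [Set.diff_eq_empty.2 hsub]
    exact measure_empty

lemma isCube_dcl (k : ℕ) (m : Fin n → ℤ) : IsCube (dcl c r k m) :=
  ⟨_, _, half_pos (sk_pos hr k), rfl⟩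

lemma dcl_subset_ball {k : ℕ} {m : Fin n → ℤ} {x : Rn n} (hx : x ∈ dcl c r k m) :
    dcl c r k m ⊆ Metric.closedBall x (sk r k) := by
  intro y hy
  rw [dcl_eq_pi hr] at hx hy
  rw [Metric.mem_closedBall]
  rw [dist_pi_le_iff (sk_pos hr k).le]
  intro i
  have h1 := hx i (Set.mem_univ i)
  have h2 := hy i (Set.mem_univ i)
  simp only [Set.mem_Icc] at h1 h2
  rw [Real.dist_eq, abs_sub_le_iff]
  constructor <;> nlinarith

lemma mem_dcl_self {k : ℕ} {x : Rn n} : x ∈ dcl c r k (adr c r k x) :=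
  dcube_subset_dcl hr _ _ (mem_adr hr _ _)

lemma adr_bounds {k : ℕ} {x : Rn n} (hx : x ∈ dcube c r 0 0) (i : Fin n) :
    0 ≤ adr c r k x i ∧ adr c r k x i < 2^k := by
  have hs := sk_pos hr (k := k)
  rw [dcube_eq_pi hr] at hx
  have h1 := hx i (Set.mem_univ i)
  simp only [Set.mem_Ico, sk] at h1
  norm_num [Pi.zero_apply] at h1
  have h1' : 0 ≤ x i - (c i - r) ∧ x i - (c i - r) < 2*r := by
    constructor <;> [nlinarith [h1.1]; nlinarith [h1.2]]
  constructor
  · exact Int.floor_nonneg.2 (div_nonneg h1'.1 hs.le)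
  · apply Int.floor_lt.2
    rw [div_lt_iff₀ hs]
    push_cast
    have h2k : (0:ℝ) < 2^k := by positivity
    calc x i - (c i - r) < 2*r := h1'.2
      _ = 2^k * sk r k := by simp only [sk]; field_simp
    

lemma dcl_subset_Q {k : ℕ} {x : Rn n} (hx : x ∈ dcube c r 0 0) :
    dcl c r k (adr c r k x) ⊆ Metric.closedBall c r := by
  have hs := sk_pos hr (k := k)
  rw [dcl_eq_pi hr, closedBall_eq_pi c hr.le]
  apply Set.pi_mono
  intro i _
  have hb := adr_bounds hr hx (k := k) i
  have hb1 : (0:ℝ) ≤ adr c r k x i := by exact_mod_cast hb.1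
  have hb2 : (adr c r k x i : ℝ) + 1 ≤ 2^k := by
    have : adr c r k x i + 1 ≤ 2^k := hb.2
    exact_mod_cast this
  have hsk : sk r k * 2^k = 2*r := by
    have h2k : (0:ℝ) < 2^k := by positivity
    simp only [sk]; field_simp
  apply Set.Icc_subset_Icc <;> nlinarith [mul_le_mul_of_nonneg_left hb2 hs.le]

lemma Q0_subset : dcube c r 0 (0 : Fin n → ℤ) ⊆ Metric.closedBall c r := by
  intro x hx
  exact (dcl_subset_Q hr (k := 0) hx) (mem_dcl_self hr (k := 0))

lemma volume_Q_diff_Q0 : volume (Metric.closedBall c r \ dcube c r 0 (0 : Fin n → ℤ)) = 0 := by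
  have h0 : sk r 0 = 2*r := by simp [sk]
  rw [measure_diff (Q0_subset hr) (msble_dcube hr 0 0).nullMeasurableSet
      (by rw [volume_dcube hr]; exact ENNReal.ofReal_ne_top),
    volume_dcube hr, volume_cube c hr.le, h0, tsub_self]

end Dyadic

/-- The Calderón–Zygmund / stopping time estimate: reverse weak (1,1) bound with constant `2^n`. -/
lemma cz_bound {c : Rn n} {r : ℝ} (hr : 0 < r) (w : Rn n → ℝ) (hw0 : ∀ x, 0 ≤ w x)
    (hwl : LocallyIntegrable w volume) {t : ℝ} (ht0 : 0 < t)
    (ht : avgOn (Metric.closedBall c r) w < t) :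
    ∫⁻ x in Metric.closedBall c r ∩ {x | t < w x}, ENNReal.ofReal (w x)
      ≤ 2^n * ENNReal.ofReal t *
        (volume.restrict (Metric.closedBall c r))
          {x | t < maximalFn ((Metric.closedBall c r).indicator w) x} := by
  classical
  set Q := Metric.closedBall c r with hQdef
  set f := Q.indicator w with hfdef
  set M := maximalFn f with hMdef
  have hQm : MeasurableSet Q := measurableSet_closedBall
  have hwQ : IntegrableOn w Q volume := hwl.integrableOn_isCompact (isCompact_closedBall c r)
  have hwd : ∀ k m, IntegrableOn w (dcube c r k m) volume := fun k m =>
    (hwl.integrableOn_isCompact (isCompact_closedBall _ _)).mono_set (dcube_subset_dcl hr k m)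
  have hfi : Integrable f volume := by
    rw [hfdef, integrable_indicator_iff hQm]
    exact hwQ
  -- notation
  set intW : ℕ → (Fin n → ℤ) → ℝ≥0∞ :=
    fun k m => ∫⁻ y in dcube c r k m, ENNReal.ofReal (w y) with hintWdef
  set vk : ℕ → ℝ≥0∞ := fun k => ENNReal.ofReal (sk r k ^ n) with hvkdef
  set P : ℕ → Rn n → Prop := fun k x => ENNReal.ofReal t * vk k < intW k (adr c r k x)
    with hPdef
  set E : Set (Rn n) := {x | x ∈ dcube c r 0 (0 : Fin n → ℤ) ∧ ∃ k, P k x} with hEdef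
  have hintW : ∀ k m, intW k m = ENNReal.ofReal (∫ y in dcube c r k m, w y) :=
    fun k m => (MeasureTheory.ofReal_integral_eq_lintegral_ofReal (hwd k m)
      (Eventually.of_forall fun y => hw0 y)).symm
  have hsk : ∀ k, (0:ℝ) < sk r k ^ n := fun k => pow_pos (sk_pos hr k) n
  -- no stopping at level 0
  have hP0 : ∀ x ∈ dcube c r 0 (0 : Fin n → ℤ), ¬ P 0 x := by
    intro x hx
    have hadr : adr c r 0 x = 0 := hx
    simp only [hPdef, not_lt, hadr]
    rw [hintW 0 0]
    have hsub : dcube c r 0 (0 : Fin n → ℤ) ⊆ Q := Q0_subset hr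
    have h1 : ∫ y in dcube c r 0 (0 : Fin n → ℤ), w y ≤ ∫ y in Q, w y := by
      apply setIntegral_mono_set hwQ (Eventually.of_forall fun y => hw0 y)
        (HasSubset.Subset.eventuallyLE hsub)
    have hvolQ : (volume Q).toReal = (2*r)^n := by
      rw [hQdef, volume_cube c hr.le, ENNReal.toReal_ofReal (by positivity)]
    have h2 : ∫ y in Q, w y ≤ t * (2*r)^n := by
      have havg : avgOn Q w = ((2*r)^n)⁻¹ * ∫ y in Q, w y := by
        rw [avgOn, vol, hvolQ]
      have h3 : ((2*r)^n)⁻¹ * (∫ y in Q, w y) < t := havg ▸ ht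
      have hp : (0:ℝ) < (2*r)^n := by positivity
      have h4 : (2*r)^n * (((2*r)^n)⁻¹ * ∫ y in Q, w y) < (2*r)^n * t :=
        mul_lt_mul_of_pos_left h3 hp
      have h5 : (2*r)^n * (((2*r)^n)⁻¹ * ∫ y in Q, w y) = ∫ y in Q, w y := by
        field_simp
      nlinarith [h4, h5]
    have hsk0 : sk r 0 = 2*r := by simp [sk]
    calc ENNReal.ofReal (∫ y in dcube c r 0 (0:Fin n → ℤ), w y)
        ≤ ENNReal.ofReal (t * (2*r)^n) := ENNReal.ofReal_le_ofReal (le_trans h1 h2)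
      _ = ENNReal.ofReal t * vk 0 := by
          simp only [hvkdef]
          rw [hsk0, ← ENNReal.ofReal_mul ht0.le]
  -- invariance of P along stopping cubes
  have hPinv : ∀ (k j : ℕ), j ≤ k → ∀ x y, y ∈ dcube c r k (adr c r k x) →
      (P j y ↔ P j x) := by
    intro k j hjk x y hy
    have := dcube_nested hr hjk x y hy
    simp only [hPdef, this]
  -- the set of stopping pairs
  set T : Set (ℕ × (Fin n → ℤ)) := {p | ∃ x, x ∈ dcube c r 0 (0 : Fin n → ℤ) ∧
      adr c r p.1 x = p.2 ∧ P p.1 x ∧ ∀ j < p.1, ¬ P j x} with hTdef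
  -- E is covered by stopping cubes
  have hEcov : E ⊆ ⋃ (p : T), dcube c r p.1.1 p.1.2 := by
    rintro x ⟨hxQ0, hex⟩
    have hk := Nat.find_spec hex
    refine Set.mem_iUnion.2 ⟨⟨(Nat.find hex, adr c r (Nat.find hex) x), ?_⟩, ?_⟩
    · exact ⟨x, hxQ0, rfl, hk, fun j hj => Nat.find_min hex hj⟩
    · exact mem_adr hr _ x
  -- each stopping cube is inside Q₀
  have hTsub : ∀ p : ℕ × (Fin n → ℤ), p ∈ T →
      dcube c r p.1 p.2 ⊆ dcube c r 0 (0 : Fin n → ℤ) := by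
    rintro ⟨k, m⟩ hp
    obtain ⟨x, hxQ0, hadr, hP, hmin⟩ := hp
    dsimp only at hadr hP hmin ⊢
    subst hadr
    intro y hy
    have h0 := dcube_nested hr (Nat.zero_le k) x y hy
    have hx0 : adr c r 0 x = 0 := hxQ0
    show adr c r 0 y = 0
    rw [h0, hx0]
  -- stopping cubes have controlled mass
  have hTbound : ∀ p : ℕ × (Fin n → ℤ), p ∈ T →
      intW p.1 p.2 ≤ 2^n * ENNReal.ofReal t * volume (dcube c r p.1 p.2) := by
    rintro ⟨k, m⟩ hp
    obtain ⟨x, hxQ0, hadr, hPk, hmin⟩ := hp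
    dsimp only at hadr hPk hmin ⊢
    subst hadr
    rw [volume_dcube hr]
    match k, hPk, hmin with
    | 0, hPk, hmin => exact absurd hPk (hP0 x hxQ0)
    | (k+1), hPk, hmin =>
      have hnot : ¬ P k x := hmin k (Nat.lt_succ_self k)
      have hsub : dcube c r (k+1) (adr c r (k+1) x) ⊆ dcube c r k (adr c r k x) := by
        intro y hy
        show adr c r k y = adr c r k x
        exact dcube_nested hr (Nat.le_succ k) x y hy
      have hmono : intW (k+1) (adr c r (k+1) x) ≤ intW k (adr c r k x) :=
        lintegral_mono_set hsub
      have hnot' : intW k (adr c r k x) ≤ ENNReal.ofReal t * vk k := not_lt.1 hnot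
      have hvk : vk k = 2^n * vk (k+1) := by
        simp only [hvkdef]
        have h1 : sk r k = 2 * sk r (k+1) := by
          rw [sk_succ hr k]; ring
        rw [h1, mul_pow, ENNReal.ofReal_mul (by positivity), ENNReal.ofReal_pow (by norm_num)]
        norm_num
      calc intW (k+1) (adr c r (k+1) x) ≤ ENNReal.ofReal t * vk k := le_trans hmono hnot'
        _ = 2^n * ENNReal.ofReal t * vk (k+1) := by rw [hvk]; ring
  -- disjointness of stopping cubes
  have hTdisj : Pairwise (Function.onFun Disjoint
      (fun p : T => dcube c r p.1.1 p.1.2)) := by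
    rintro ⟨⟨k, m⟩, hp⟩ ⟨⟨k', m'⟩, hq⟩ hne
    simp only [Function.onFun]
    rw [Set.disjoint_left]
    intro y hy hy'
    obtain ⟨x, hxQ0, hadr, hPk, hmin⟩ := hp
    obtain ⟨x', hxQ0', hadr', hPk', hmin'⟩ := hq
    dsimp only at hadr hPk hmin hadr' hPk' hmin' hy hy'
    subst hadr
    subst hadr' 
    rcases lt_trichotomy k k' with hlt | heq | hgt
    · have h1 : P k y := (hPinv k k le_rfl x y hy).2 hPk
      have h2 : ¬ P k y := fun h => (hmin' k hlt) ((hPinv k' k hlt.le x' y hy').1 h)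
      exact h2 h1
    · subst heq
      apply hne
      have e1 : adr c r k y = adr c r k x := hy
      have e2 : adr c r k y = adr c r k x' := hy'
      exact Subtype.ext (Prod.ext rfl (e1.symm.trans e2))
    · have h1 : P k' y := (hPinv k' k' le_rfl x' y hy').2 hPk'
      have h2 : ¬ P k' y := fun h => (hmin k' hgt) ((hPinv k k' hgt.le x y hy).1 h)
      exact h2 h1
  -- a.e. dyadic Lebesgue differentiation
  have hG1 : ∀ᵐ x, x ∈ dcube c r 0 (0 : Fin n → ℤ) → (∀ k, ¬ P k x) → w x ≤ t := by
    filter_upwards [(vFam n).ae_tendsto_average hwl] with x hx hxQ0 hnP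
    have hmem : ∀ k : ℕ, dcl c r k (adr c r k x) ∈ (vFam n).setsAt x := fun k =>
      cube_mem_vFam (half_pos (sk_pos hr k)) (mem_dcl_self hr)
    have hsk0 : Tendsto (fun k : ℕ => sk r k) atTop (nhds 0) := by
      have h1 : Tendsto (fun k : ℕ => (2*r) * (1/2:ℝ)^k) atTop (nhds ((2*r) * 0)) :=
        (tendsto_pow_atTop_nhds_zero_of_lt_one (by norm_num) (by norm_num)).const_mul _
      rw [mul_zero] at h1
      refine h1.congr fun k => ?_
      have h2 : (0:ℝ) < 2^k := by positivity
      simp only [sk]; field_simp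
      rw [← mul_pow]; norm_num
    have htend : Tendsto (fun k : ℕ => dcl c r k (adr c r k x)) atTop
        ((vFam n).filterAt x) := by
      rw [VitaliFamily.tendsto_filterAt_iff]
      refine ⟨Eventually.of_forall hmem, fun ε hε => ?_⟩
      filter_upwards [hsk0.eventually (eventually_le_nhds hε)] with k hk
      exact subset_trans (dcl_subset_ball hr (mem_dcl_self hr))
        (Metric.closedBall_subset_closedBall hk)
    have hlim := hx.comp htend
    refine le_of_tendsto hlim (Eventually.of_forall fun k => ?_)
    show ⨍ y in dcl c r k (adr c r k x), w y ≤ t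
    have hnP' : intW k (adr c r k x) ≤ ENNReal.ofReal t * vk k := not_lt.1 (hnP k)
    rw [hintW, hvkdef, ← ENNReal.ofReal_mul ht0.le] at hnP'
    have hInt : ∫ y in dcube c r k (adr c r k x), w y ≤ t * sk r k ^ n :=
      (ENNReal.ofReal_le_ofReal_iff (mul_nonneg ht0.le (hsk k).le)).1 hnP'
    have havg : ⨍ y in dcl c r k (adr c r k x), w y
        = (sk r k ^ n)⁻¹ * ∫ y in dcube c r k (adr c r k x), w y := by
      rw [setAverage_eq, measureReal_def, volume_dcl hr, ENNReal.toReal_ofReal (hsk k).le, smul_eq_mul]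
      congr 1
      rw [show volume.restrict (dcl c r k (adr c r k x))
          = volume.restrict (dcube c r k (adr c r k x)) from restrict_dcl_eq hr _ _]
    rw [havg]
    calc (sk r k ^ n)⁻¹ * ∫ y in dcube c r k (adr c r k x), w y
        ≤ (sk r k ^ n)⁻¹ * (t * sk r k ^ n) :=
          mul_le_mul_of_nonneg_left hInt (inv_nonneg.2 (hsk k).le)
      _ = t := by
          rw [mul_comm t (sk r k ^ n), inv_mul_cancel_left₀ (hsk k).ne']
  have hG2 : ∀ᵐ x, BddAbove {a | ∃ P : Set (Rn n), IsCube P ∧ x ∈ P ∧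
      a = avgOn P (fun y => |f y|)} := ae_bddAbove f hfi
  -- name the two null sets
  set N1 : Set (Rn n) := {x | ¬ (x ∈ dcube c r 0 (0 : Fin n → ℤ) → (∀ k, ¬ P k x) → w x ≤ t)}
    with hN1def
  set N2 : Set (Rn n) := {x | ¬ BddAbove {a | ∃ P : Set (Rn n), IsCube P ∧ x ∈ P ∧
      a = avgOn P (fun y => |f y|)}} with hN2def
  have hN1 : volume N1 = 0 := hG1
  have hN2 : volume N2 = 0 := hG2
  set U : Set (Rn n) := ⋃ (p : T), dcube c r p.1.1 p.1.2 with hUdef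
  -- Step 1: pass to E
  have hstep1 : ∫⁻ x in Q ∩ {x | t < w x}, ENNReal.ofReal (w x)
      ≤ ∫⁻ x in E, ENNReal.ofReal (w x) := by
    have hsub : Q ∩ {x | t < w x} ⊆ E ∪ ((Q \ dcube c r 0 (0 : Fin n → ℤ)) ∪ N1) := by
      rintro x ⟨hxQ, hxw⟩
      by_cases hxQ0 : x ∈ dcube c r 0 (0 : Fin n → ℤ)
      · by_cases hbad : x ∈ N1
        · exact Or.inr (Or.inr hbad)
        · simp only [hN1def, Set.mem_setOf_eq, not_not] at hbad
          left
          refine ⟨hxQ0, ?_⟩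
          by_contra hno
          push_neg at hno
          exact absurd hxw (not_lt.2 (hbad hxQ0 hno))
      · exact Or.inr (Or.inl ⟨hxQ, hxQ0⟩)
    have hnull : volume ((Q \ dcube c r 0 (0 : Fin n → ℤ)) ∪ N1) = 0 :=
      measure_union_null (volume_Q_diff_Q0 hr) hN1
    calc ∫⁻ x in Q ∩ {x | t < w x}, ENNReal.ofReal (w x)
        ≤ ∫⁻ x in E ∪ ((Q \ dcube c r 0 (0 : Fin n → ℤ)) ∪ N1), ENNReal.ofReal (w x) :=
          lintegral_mono_set hsub
      _ ≤ (∫⁻ x in E, ENNReal.ofReal (w x))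
          + ∫⁻ x in (Q \ dcube c r 0 (0 : Fin n → ℤ)) ∪ N1, ENNReal.ofReal (w x) :=
          lintegral_union_le _ _ _
      _ = ∫⁻ x in E, ENNReal.ofReal (w x) := by
          rw [setLIntegral_measure_zero _ _ hnull, add_zero]
  -- Step 2-5: sum over stopping cubes
  have hstep2 : ∫⁻ x in E, ENNReal.ofReal (w x) ≤ ∫⁻ x in U, ENNReal.ofReal (w x) :=
    lintegral_mono_set hEcov
  have hstep3 : ∫⁻ x in U, ENNReal.ofReal (w x) = ∑' (p : T), intW p.1.1 p.1.2 :=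
    lintegral_iUnion (fun p => msble_dcube hr _ _) hTdisj _
  have hstep4 : ∑' (p : T), intW p.1.1 p.1.2
      ≤ 2^n * ENNReal.ofReal t * volume U := by
    calc ∑' (p : T), intW p.1.1 p.1.2
        ≤ ∑' (p : T), 2^n * ENNReal.ofReal t * volume (dcube c r p.1.1 p.1.2) :=
          ENNReal.tsum_le_tsum (fun p => hTbound _ p.2)
      _ = 2^n * ENNReal.ofReal t * ∑' (p : T), volume (dcube c r p.1.1 p.1.2) :=
          ENNReal.tsum_mul_left
      _ = 2^n * ENNReal.ofReal t * volume U := by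
          rw [measure_iUnion hTdisj (fun p => msble_dcube hr _ _)]
  -- Step 6: the union is inside the superlevel set of M
  have hstep6 : volume U ≤ (volume.restrict Q) {x | t < M x} := by
    have hUsub : U ⊆ ({x | t < M x} ∩ Q) ∪ N2 := by
      rintro y hy
      rcases Set.mem_iUnion.1 hy with ⟨⟨⟨k, m⟩, hp⟩, hy⟩
      by_cases hb : y ∈ N2
      · exact Or.inr hb
      simp only [hN2def, Set.mem_setOf_eq, not_not] at hb
      left
      have hyQ : y ∈ Q := Q0_subset hr (hTsub _ hp hy)
      refine ⟨?_, hyQ⟩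
      obtain ⟨x, hxQ0, hadr, hPk, hmin⟩ := hp
      simp only at hy hadr
      rw [← hadr] at hy
      have hycl : y ∈ dcl c r k (adr c r k x) := dcube_subset_dcl hr _ _ hy
      have hcube : IsCube (dcl c r k (adr c r k x)) := isCube_dcl hr _ _
      have hQsub : dcl c r k (adr c r k x) ⊆ Q := dcl_subset_Q hr hxQ0
      have hMge := maximal_ge hb hcube hycl
      have havgf : avgOn (dcl c r k (adr c r k x)) (fun y => |f y|)
          = (sk r k ^ n)⁻¹ * ∫ y in dcube c r k (adr c r k x), w y := by
        rw [avgOn, vol, volume_dcl hr, ENNReal.toReal_ofReal (hsk k).le]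
        congr 1
        rw [show volume.restrict (dcl c r k (adr c r k x))
            = volume.restrict (dcube c r k (adr c r k x)) from restrict_dcl_eq hr _ _]
        apply setIntegral_congr_fun (msble_dcube hr _ _)
        intro z hz
        show |f z| = w z
        rw [hfdef, Set.indicator_of_mem (hQsub (dcube_subset_dcl hr _ _ hz)),
          abs_of_nonneg (hw0 z)]
      have hgt : t * sk r k ^ n < ∫ y in dcube c r k (adr c r k x), w y := by
        have hPk' := hPk
        rw [hPdef] at hPk'
        simp only at hPk'
        rw [hintW, hvkdef, ← ENNReal.ofReal_mul ht0.le] at hPk'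
        exact (ENNReal.ofReal_lt_ofReal_iff_of_nonneg (mul_nonneg ht0.le (hsk k).le)).1 hPk'
      have htavg : t < avgOn (dcl c r k (adr c r k x)) (fun y => |f y|) := by
        rw [havgf]
        have h1 : (sk r k ^ n)⁻¹ * (t * sk r k ^ n)
            < (sk r k ^ n)⁻¹ * ∫ y in dcube c r k (adr c r k x), w y :=
          mul_lt_mul_of_pos_left hgt (inv_pos.2 (hsk k))
        have h2 : (sk r k ^ n)⁻¹ * (t * sk r k ^ n) = t := by
          rw [mul_comm t (sk r k ^ n), inv_mul_cancel_left₀ (hsk k).ne']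
        linarith
      show t < M y
      exact lt_of_lt_of_le htavg hMge
    calc volume U ≤ volume (({x | t < M x} ∩ Q) ∪ N2) := measure_mono hUsub
      _ ≤ volume ({x | t < M x} ∩ Q) + volume N2 := measure_union_le _ _
      _ = volume ({x | t < M x} ∩ Q) := by rw [hN2, add_zero]
      _ = (volume.restrict Q) {x | t < M x} := (Measure.restrict_apply' hQm).symm
  -- combine
  calc ∫⁻ x in Q ∩ {x | t < w x}, ENNReal.ofReal (w x)
      ≤ ∑' (p : T), intW p.1.1 p.1.2 := by rw [← hstep3]; exact le_trans hstep1 hstep2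
    _ ≤ 2^n * ENNReal.ofReal t * volume U := hstep4
    _ ≤ 2^n * ENNReal.ofReal t * (volume.restrict Q) {x | t < M x} := by
        exact mul_le_mul_right hstep6 _

/-- On a cube, the maximal function is a.e. at least the average of `w`. -/
lemma maximal_ae_ge {Q : Set (Rn n)} (hQ : IsCube Q) (w : Rn n → ℝ) (hw0 : ∀ x, 0 ≤ w x)
    (hwl : LocallyIntegrable w volume) :
    ∀ᵐ x, x ∈ Q → avgOn Q w ≤ maximalFn (Q.indicator w) x := by
  obtain ⟨c, r, hr, rfl⟩ := hQ
  have hfi : Integrable ((Metric.closedBall c r).indicator w) volume := by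
    rw [integrable_indicator_iff measurableSet_closedBall]
    exact hwl.integrableOn_isCompact (isCompact_closedBall c r)
  filter_upwards [ae_bddAbove _ hfi] with x hB hx
  have hle := maximal_ge hB ⟨c, r, hr, rfl⟩ hx
  have heq : avgOn (Metric.closedBall c r)
      (fun y => |(Metric.closedBall c r).indicator w y|) = avgOn (Metric.closedBall c r) w := by
    unfold avgOn
    congr 1
    apply setIntegral_congr_fun measurableSet_closedBall
    intro y hy
    show |(Metric.closedBall c r).indicator w y| = w y
    rw [Set.indicator_of_mem hy, abs_of_nonneg (hw0 y)]
  rwa [heq] at hle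

/-- `∫_Q M(wχ_Q) ≥ w(Q)`. -/
lemma integral_maximal_ge {Q : Set (Rn n)} (hQ : IsCube Q) (w : Rn n → ℝ) (hw0 : ∀ x, 0 ≤ w x)
    (hwl : LocallyIntegrable w volume)
    (hMi : IntegrableOn (maximalFn (Q.indicator w)) Q volume) :
    intOn w Q ≤ ∫ x in Q, maximalFn (Q.indicator w) x := by
  have hvQ : 0 < vol Q := by
    obtain ⟨c, r, hr, rfl⟩ := hQ
    rw [vol, volume_cube c hr.le, ENNReal.toReal_ofReal (by positivity)]
    positivity
  have hQm : MeasurableSet Q := by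
    obtain ⟨c, r, hr, rfl⟩ := hQ; exact measurableSet_closedBall
  have hQfin : volume Q < ⊤ := by
    obtain ⟨c, r, hr, rfl⟩ := hQ
    rw [volume_cube c hr.le]; exact ENNReal.ofReal_lt_top
  have key : ∀ᵐ x ∂(volume.restrict Q), avgOn Q w ≤ maximalFn (Q.indicator w) x :=
    (ae_restrict_iff' hQm).2 (maximal_ae_ge hQ w hw0 hwl)
  have hmono : ∫ x in Q, avgOn Q w ≤ ∫ x in Q, maximalFn (Q.indicator w) x := by
    apply integral_mono_ae (integrableOn_const hQfin.ne : IntegrableOn (fun _ => avgOn Q w) Q volume) hMi key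
  rw [setIntegral_const, smul_eq_mul, measureReal_def] at hmono
  have : (volume Q).toReal * avgOn Q w = intOn w Q := by
    rw [avgOn, ← vol]
    field_simp [intOn]
    rfl
  linarith [hmono, this]

/-- Per-cube main estimate. -/
lemma key_ineq {Q : Set (Rn n)} (hQ : IsCube Q) (w : Rn n → ℝ) (hw0 : ∀ x, 0 ≤ w x)
    (hwl : LocallyIntegrable w volume) (hpos : 0 < intOn w Q)
    (hMi : IntegrableOn (maximalFn (Q.indicator w)) Q volume) :
    ∫ x in Q, (1 + max (Real.log (w x / avgOn Q w)) 0) * w x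
      ≤ intOn w Q + 2^n * ((∫ x in Q, maximalFn (Q.indicator w) x) - intOn w Q) := by
  classical
  obtain ⟨c, r, hr, rfl⟩ := hQ
  set Q := Metric.closedBall c r with hQdef
  set f := Q.indicator w with hfdef
  set M := maximalFn f with hMdef
  set ℓ := avgOn Q w with hldef
  have hQm : MeasurableSet Q := measurableSet_closedBall
  have hwQ : IntegrableOn w Q volume := hwl.integrableOn_isCompact (isCompact_closedBall c r)
  have hQvolpos : (0:ℝ) < (2*r)^n := by positivity
  have hQvol : (volume Q).toReal = (2*r)^n := by
    rw [hQdef, volume_cube c hr.le, ENNReal.toReal_ofReal (by positivity)]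
  have hQfin : volume Q < ⊤ := by rw [hQdef, volume_cube c hr.le]; exact ENNReal.ofReal_lt_top
  have hℓ : 0 < ℓ := by
    have hv : vol Q = (2*r)^n := by rw [vol, hQvol]
    rw [hldef, avgOn, hv]
    exact mul_pos (inv_pos.2 hQvolpos) hpos
  have hwm : AEMeasurable w (volume.restrict Q) := hwQ.aemeasurable
  set μw : Measure (Rn n) := (volume.restrict Q).withDensity (fun x => ENNReal.ofReal (w x))
    with hμwdef
  have hwmw : AEMeasurable w μw := hwm.mono_ac (withDensity_absolutelyContinuous _ _)
  set g : ℝ → ℝ := fun s => if s ≤ ℓ then 0 else s⁻¹ with hgdef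
  have hgmeas : Measurable g := Measurable.ite measurableSet_Iic measurable_const measurable_inv
  have hg0 : ∀ s, 0 ≤ g s := by
    intro s
    simp only [hgdef]
    split_ifs with h
    · exact le_refl 0
    · exact inv_nonneg.2 (le_of_lt (lt_trans hℓ (not_le.1 h)))
  have hgbd : ∀ s, g s ≤ ℓ⁻¹ := by
    intro s
    simp only [hgdef]
    split_ifs with h
    · positivity
    · exact inv_anti₀ hℓ (le_of_lt (not_le.1 h))
  have hgi : ∀ a b : ℝ, IntervalIntegrable g volume a b := by
    intro a b
    constructor <;>
    · apply Measure.integrableOn_of_bounded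
      · rw [Real.volume_Ioc]; exact ENNReal.ofReal_ne_top
      · exact hgmeas.aestronglyMeasurable
      · exact Eventually.of_forall fun s => by
          rw [Real.norm_eq_abs, abs_of_nonneg (hg0 s)]; exact hgbd s
  have hGzero : ∀ s : ℝ, s ≤ ℓ → ∫ u in (0:ℝ)..s, g u = 0 := by
    intro s hsl
    have : ∫ u in (0:ℝ)..s, g u = ∫ u in (0:ℝ)..s, (0:ℝ) := by
      apply intervalIntegral.integral_congr_ae
      apply Eventually.of_forall
      intro u hu
      rcases Set.mem_uIoc.1 hu with h | h
      · exact if_pos (le_trans h.2 hsl)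
      · exact if_pos (le_trans h.2 hℓ.le)
    rw [this, intervalIntegral.integral_zero]
  have hGeq : ∀ s, 0 ≤ s → ∫ u in (0:ℝ)..s, g u = max (Real.log (s / ℓ)) 0 := by
    intro s hs
    rcases le_or_gt s ℓ with hsl | hsl
    · rw [hGzero s hsl]
      symm
      rw [max_eq_right]
      exact Real.log_nonpos (by positivity) ((div_le_one hℓ).2 hsl)
    · have hs0 : 0 < s := lt_trans hℓ hsl
      have hsplit : ∫ u in (0:ℝ)..s, g u = (∫ u in (0:ℝ)..ℓ, g u) + ∫ u in ℓ..s, g u :=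
        (intervalIntegral.integral_add_adjacent_intervals (hgi 0 ℓ) (hgi ℓ s)).symm
      have h2 : ∫ u in ℓ..s, g u = Real.log (s / ℓ) := by
        have hcongr : ∫ u in ℓ..s, g u = ∫ u in ℓ..s, u⁻¹ := by
          apply intervalIntegral.integral_congr_ae
          apply Eventually.of_forall
          intro u hu
          rw [Set.uIoc_of_le hsl.le] at hu
          exact if_neg (not_le.2 hu.1)
        rw [hcongr, integral_inv_of_pos hℓ hs0]
      rw [hsplit, hGzero ℓ le_rfl, h2, zero_add]
      symm
      rw [max_eq_left]
      exact Real.log_nonneg ((one_le_div hℓ).2 hsl.le)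
  -- Layer cake on the weighted side
  have hlc := lintegral_comp_eq_lintegral_meas_lt_mul μw
    (Eventually.of_forall hw0) hwmw (fun u _ => hgi 0 u) (Eventually.of_forall hg0)
  have hL : ∫⁻ x, ENNReal.ofReal (max (Real.log (w x / ℓ)) 0) ∂μw
      = ∫⁻ s in Set.Ioi (0:ℝ), μw {a | s < w a} * ENNReal.ofReal (g s) := by
    rw [← hlc]
    exact lintegral_congr fun x => by rw [hGeq (w x) (hw0 x)]
  set F : ℝ → ℝ≥0∞ := fun s => (volume.restrict Q) {x | s < M x} with hFdef
  -- pointwise CZ bound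
  have hpt : ∀ s, s ∈ Set.Ioi (0:ℝ) → μw {a | s < w a} * ENNReal.ofReal (g s)
      ≤ 2^n * (if s ≤ ℓ then 0 else F s) := by
    intro s hs
    rcases le_or_gt s ℓ with hsl | hsl
    · rw [if_pos hsl]
      simp only [hgdef]
      rw [if_pos hsl, ENNReal.ofReal_zero, mul_zero]
      exact zero_le
    · rw [if_neg (not_le.2 hsl)]
      simp only [hgdef]
      rw [if_neg (not_le.2 hsl)]
      have hcz := cz_bound hr w hw0 hwl (Set.mem_Ioi.1 hs) hsl
      have hμws : μw {a | s < w a} = ∫⁻ x in Q ∩ {x | s < w x}, ENNReal.ofReal (w x) := by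
        rw [hμwdef, withDensity_apply' _ _]
        rw [Measure.restrict_restrict' hQm, Set.inter_comm]
      calc μw {a | s < w a} * ENNReal.ofReal s⁻¹
          ≤ (2^n * ENNReal.ofReal s * F s) * ENNReal.ofReal s⁻¹ := by
            rw [hμws]
            exact mul_le_mul_left hcz _
        _ = 2^n * F s * (ENNReal.ofReal s * ENNReal.ofReal s⁻¹) := by ring
        _ = 2^n * F s := by
            rw [← ENNReal.ofReal_mul (le_of_lt hs), mul_inv_cancel₀ (ne_of_gt hs),
              ENNReal.ofReal_one, mul_one]
  have hR1 : ∫⁻ s in Set.Ioi (0:ℝ), μw {a | s < w a} * ENNReal.ofReal (g s)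
      ≤ ∫⁻ s in Set.Ioi (0:ℝ), 2^n * (if s ≤ ℓ then 0 else F s) := by
    apply lintegral_mono_ae
    rw [ae_restrict_iff' measurableSet_Ioi]
    exact Eventually.of_forall hpt
  have hR2 : ∫⁻ s in Set.Ioi (0:ℝ), (2^n : ℝ≥0∞) * (if s ≤ ℓ then 0 else F s)
      = 2^n * ∫⁻ s in Set.Ioi ℓ, F s := by
    rw [lintegral_const_mul' _ _ (ENNReal.pow_ne_top ENNReal.ofNat_ne_top)]
    congr 1
    rw [show Set.Ioi (0:ℝ) = Set.Ioc 0 ℓ ∪ Set.Ioi ℓ from (Set.Ioc_union_Ioi_eq_Ioi hℓ.le).symm,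
      lintegral_union measurableSet_Ioi]
    · have hz : ∫⁻ s in Set.Ioc (0:ℝ) ℓ, (if s ≤ ℓ then 0 else F s) = 0 := by
        rw [setLIntegral_congr_fun measurableSet_Ioc
          (fun s hs => if_pos hs.2)]
        simp
      have ho : ∫⁻ s in Set.Ioi ℓ, (if s ≤ ℓ then 0 else F s) = ∫⁻ s in Set.Ioi ℓ, F s :=
        setLIntegral_congr_fun measurableSet_Ioi
          (fun s hs => if_neg (not_le.2 hs))
      rw [hz, ho, zero_add]
    · exact Set.Ioc_disjoint_Ioi le_rfl
  have hcv : ∫⁻ s in Set.Ioi ℓ, F s = ∫⁻ u in Set.Ioi (0:ℝ), F (u + ℓ) := by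
    have hmp : MeasurePreserving (fun u : ℝ => u + ℓ) volume volume :=
      measurePreserving_add_right volume ℓ
    have hemb : MeasurableEmbedding (fun u : ℝ => u + ℓ) :=
      (Homeomorph.addRight ℓ).measurableEmbedding
    calc ∫⁻ s in Set.Ioi ℓ, F s = ∫⁻ s in (fun u : ℝ => u + ℓ) '' Set.Ioi 0, F s := by
          rw [Set.image_add_const_Ioi, zero_add]
      _ = ∫⁻ u in Set.Ioi (0:ℝ), F (u + ℓ) :=
          (hmp.setLIntegral_comp_emb hemb F _).symm
  have hMae : AEMeasurable M (volume.restrict Q) := hMi.aemeasurable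
  have hmax_meas : AEMeasurable (fun x => max (M x - ℓ) 0) (volume.restrict Q) :=
    (hMae.sub aemeasurable_const).max aemeasurable_const
  have hlc2 : ∫⁻ x in Q, ENNReal.ofReal (max (M x - ℓ) 0)
      = ∫⁻ u in Set.Ioi (0:ℝ), (volume.restrict Q) {a | u < max (M a - ℓ) 0} :=
    lintegral_eq_lintegral_meas_lt (volume.restrict Q)
      (Eventually.of_forall fun x => le_max_right _ _) hmax_meas
  have hR3 : ∫⁻ u in Set.Ioi (0:ℝ), F (u + ℓ)
      = ∫⁻ x in Q, ENNReal.ofReal (max (M x - ℓ) 0) := by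
    rw [hlc2]
    symm
    apply setLIntegral_congr_fun measurableSet_Ioi
    intro u hu
    simp only [hFdef]
    congr 1
    ext a
    simp only [Set.mem_setOf_eq, lt_max_iff]
    constructor
    · rintro (h | h)
      · linarith
      · exact absurd h (not_lt.2 (le_of_lt (Set.mem_Ioi.1 hu)))
    · intro h
      left
      linarith
  have hsubint : IntegrableOn (fun x => M x - ℓ) Q volume :=
    hMi.sub (integrableOn_const hQfin.ne)
  have hposint : IntegrableOn (fun x => max (M x - ℓ) 0) Q volume := hsubint.pos_part
  have hImax0 : 0 ≤ ∫ x in Q, max (M x - ℓ) 0 :=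
    setIntegral_nonneg hQm fun x _ => le_max_right _ _
  have hRconv : ∫⁻ x in Q, ENNReal.ofReal (max (M x - ℓ) 0)
      = ENNReal.ofReal (∫ x in Q, max (M x - ℓ) 0) :=
    (MeasureTheory.ofReal_integral_eq_lintegral_ofReal hposint
      (Eventually.of_forall fun x => le_max_right _ _)).symm
  have hchain : ∫⁻ x, ENNReal.ofReal (max (Real.log (w x / ℓ)) 0) ∂μw
      ≤ 2^n * ENNReal.ofReal (∫ x in Q, max (M x - ℓ) 0) := by
    rw [hL]
    calc ∫⁻ s in Set.Ioi (0:ℝ), μw {a | s < w a} * ENNReal.ofReal (g s)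
        ≤ ∫⁻ s in Set.Ioi (0:ℝ), 2^n * (if s ≤ ℓ then 0 else F s) := hR1
      _ = 2^n * ∫⁻ s in Set.Ioi ℓ, F s := hR2
      _ = 2^n * ∫⁻ u in Set.Ioi (0:ℝ), F (u + ℓ) := by rw [hcv]
      _ = 2^n * ∫⁻ x in Q, ENNReal.ofReal (max (M x - ℓ) 0) := by rw [hR3]
      _ = 2^n * ENNReal.ofReal (∫ x in Q, max (M x - ℓ) 0) := by rw [hRconv]
  -- expand the withDensity integral
  have hphi_meas : AEMeasurable (fun x => max (Real.log (w x / ℓ)) 0) (volume.restrict Q) :=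
    (Real.measurable_log.comp_aemeasurable (hwm.div_const ℓ)).max aemeasurable_const
  have hLD : ∫⁻ x, ENNReal.ofReal (max (Real.log (w x / ℓ)) 0) ∂μw
      = ∫⁻ x in Q, ENNReal.ofReal (max (Real.log (w x / ℓ)) 0 * w x) := by
    rw [hμwdef, lintegral_withDensity_eq_lintegral_mul₀' hwm.ennreal_ofReal
      (hphi_meas.ennreal_ofReal.mono_ac (withDensity_absolutelyContinuous _ _))]
    apply lintegral_congr
    intro x
    simp only [Pi.mul_apply]
    rw [mul_comm, ← ENNReal.ofReal_mul (le_max_right _ _)]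
  have hφ0 : ∀ x, 0 ≤ max (Real.log (w x / ℓ)) 0 * w x :=
    fun x => mul_nonneg (le_max_right _ _) (hw0 x)
  have hφsm : AEStronglyMeasurable (fun x => max (Real.log (w x / ℓ)) 0 * w x)
      (volume.restrict Q) := (hphi_meas.mul hwm).aestronglyMeasurable
  have hφlint : ∫⁻ x in Q, ENNReal.ofReal (max (Real.log (w x / ℓ)) 0 * w x)
      ≤ 2^n * ENNReal.ofReal (∫ x in Q, max (M x - ℓ) 0) :=
    le_trans (le_of_eq hLD.symm) hchain
  have hφfin : HasFiniteIntegral (fun x => max (Real.log (w x / ℓ)) 0 * w x)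
      (volume.restrict Q) := by
    rw [hasFiniteIntegral_iff_ofReal (Eventually.of_forall hφ0)]
    refine lt_of_le_of_lt hφlint ?_
    exact ENNReal.mul_lt_top (ENNReal.pow_lt_top ENNReal.ofNat_lt_top) ENNReal.ofReal_lt_top
  have hφint : IntegrableOn (fun x => max (Real.log (w x / ℓ)) 0 * w x) Q volume :=
    ⟨hφsm, hφfin⟩
  have hφle : ∫ x in Q, max (Real.log (w x / ℓ)) 0 * w x
      ≤ 2^n * ∫ x in Q, max (M x - ℓ) 0 := by
    have h1 : ENNReal.ofReal (∫ x in Q, max (Real.log (w x / ℓ)) 0 * w x)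
        ≤ ENNReal.ofReal (2^n * ∫ x in Q, max (M x - ℓ) 0) := by
      rw [MeasureTheory.ofReal_integral_eq_lintegral_ofReal hφint (Eventually.of_forall hφ0)]
      refine le_trans hφlint (le_of_eq ?_)
      rw [ENNReal.ofReal_mul (by positivity), ENNReal.ofReal_pow (by norm_num)]
      norm_num
    exact (ENNReal.ofReal_le_ofReal_iff (by positivity)).1 h1
  -- identify the integral of the positive part
  have hI2 : ∫ x in Q, max (M x - ℓ) 0 = (∫ x in Q, M x) - intOn w Q := by
    have hae : ∀ᵐ x ∂(volume.restrict Q), max (M x - ℓ) 0 = M x - ℓ := by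
      filter_upwards [(ae_restrict_iff' hQm).2 (maximal_ae_ge ⟨c, r, hr, rfl⟩ w hw0 hwl)]
        with x hx
      exact max_eq_left (sub_nonneg.2 hx)
    rw [integral_congr_ae hae, integral_sub hMi (integrableOn_const hQfin.ne),
      setIntegral_const, smul_eq_mul, measureReal_def]
    have hℓint : (volume Q).toReal * ℓ = intOn w Q := by
      rw [hldef, avgOn, ← vol]
      have hvne : vol Q ≠ 0 := by rw [vol, hQvol]; positivity
      field_simp [intOn]
      rfl
    rw [hℓint]
  have hsplit : ∫ x in Q, (1 + max (Real.log (w x / ℓ)) 0) * w x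
      = intOn w Q + ∫ x in Q, max (Real.log (w x / ℓ)) 0 * w x := by
    have heq : ∀ x, (1 + max (Real.log (w x / ℓ)) 0) * w x
        = w x + max (Real.log (w x / ℓ)) 0 * w x := fun x => by ring
    simp only [heq]
    rw [integral_add hwQ hφint]
    rfl
  rw [hsplit, ← hI2]
  linarith [hφle]

end S10

/-- For `w ∈ A_∞`, the logarithmic `A_∞` constant satisfies
`[w]^{log}_{A∞} - 1 ≤ 2^n ([w]_{A∞} - 1)`. -/
theorem stmt10 {n : ℕ} (w : Rn n → ℝ) (hw0 : ∀ x, 0 ≤ w x)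
    (hwl : LocallyIntegrable w volume)
    (hpos : ∀ Q : Set (Rn n), IsCube Q → 0 < intOn w Q)
    (hM : ∀ Q : Set (Rn n), IsCube Q →
      IntegrableOn (maximalFn (Q.indicator w)) Q volume)
    (hfw : BddAbove (fwSet w)) :
    logAinf w - 1 ≤ (2 : ℝ) ^ n * (fujiiWilson w - 1) := by
  have h2n : (0:ℝ) < 2^n := by positivity
  have hone : (1:ℝ) ≤ fujiiWilson w := by
    have hQ1 : IsCube (Metric.closedBall (0 : Rn n) 1) := ⟨0, 1, one_pos, rfl⟩
    have hmem : (intOn w (Metric.closedBall (0 : Rn n) 1))⁻¹ *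
        ∫ x in Metric.closedBall (0 : Rn n) 1,
          maximalFn ((Metric.closedBall (0 : Rn n) 1).indicator w) x ∈ fwSet w :=
      ⟨_, hQ1, rfl⟩
    have hp := hpos _ hQ1
    have hge := S10.integral_maximal_ge hQ1 w hw0 hwl (hM _ hQ1)
    have h1le : (1:ℝ) ≤ (intOn w (Metric.closedBall (0 : Rn n) 1))⁻¹ *
        ∫ x in Metric.closedBall (0 : Rn n) 1,
          maximalFn ((Metric.closedBall (0 : Rn n) 1).indicator w) x := by
      rw [inv_mul_eq_div, le_div_iff₀ hp, one_mul]
      exact hge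
    exact le_trans h1le (le_csSup hfw hmem)
  have hmain : logAinf w ≤ 1 + 2^n * (fujiiWilson w - 1) := by
    apply Real.sSup_le _ (by nlinarith)
    rintro a ⟨Q, hQ, rfl⟩
    have hp := hpos _ hQ
    have hMQ := hM _ hQ
    have hkey := S10.key_ineq hQ w hw0 hwl hp hMQ
    have hMel : (intOn w Q)⁻¹ * ∫ x in Q, maximalFn (Q.indicator w) x ≤ fujiiWilson w :=
      le_csSup hfw ⟨Q, hQ, rfl⟩
    have hMge : intOn w Q ≤ ∫ x in Q, maximalFn (Q.indicator w) x :=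
      S10.integral_maximal_ge hQ w hw0 hwl hMQ
    calc (intOn w Q)⁻¹ * ∫ x in Q, (1 + max (Real.log (w x / avgOn Q w)) 0) * w x
        ≤ (intOn w Q)⁻¹ * (intOn w Q +
            2^n * ((∫ x in Q, maximalFn (Q.indicator w) x) - intOn w Q)) :=
          mul_le_mul_of_nonneg_left hkey (inv_nonneg.2 hp.le)
      _ = 1 + 2^n * ((intOn w Q)⁻¹ * (∫ x in Q, maximalFn (Q.indicator w) x) - 1) := by
          field_simp
      _ ≤ 1 + 2^n * (fujiiWilson w - 1) := by nlinarith
  linarith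
end
end

section
/- Let w ∈ A_∞ on ℝⁿ with Fujii–Wilson constant [w]_{A_∞}. Then log w belongs to the weighted BMO space BMO_w with ‖log w‖_{BMO_w} ≤ 2^{n+3}([w]_{A_∞} − 1). Moreover, for each cube Q, (1/w(Q))∫_Q |log w − (log w)_{Q,w}| w dx ≤ 2^{n+3}((1/w(Q))∫_Q M(wχ_Q) dx − 1). -/
open MeasureTheory Real

noncomputable section

namespace CZAux

open Metric Set Filter Topology

variable {n : ℕ}

lemma hyperplane_null (i : Fin n) (t : ℝ) : volume {x : Rn n | x i = t} = 0 := by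
  have h : {x : Rn n | x i = t} =
      Set.pi Set.univ (fun j => if j = i then ({t} : Set ℝ) else Set.univ) := by
    ext x
    simp only [Set.mem_setOf_eq, Set.mem_pi, Set.mem_univ, forall_true_left]
    constructor
    · intro hx j
      by_cases hj : j = i
      · subst hj; simp [hx]
      · simp [hj]
    · intro hx
      have := hx i
      simpa using this
  rw [h, volume_pi_pi]
  refine Finset.prod_eq_zero (Finset.mem_univ i) ?_
  simp

/-- side length of generation `k` dyadic boxes. -/
def sk (r : ℝ) (k : ℕ) : ℝ := 2 * r / 2 ^ k

lemma sk_pos {r : ℝ} (hr : 0 < r) (k : ℕ) : 0 < sk r k := by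
  unfold sk; positivity

lemma sk_factor {r : ℝ} {m k : ℕ} (hmk : m ≤ k) : sk r m = (2 : ℝ) ^ (k - m) * sk r k := by
  unfold sk
  have h2 : (2 : ℝ) ^ k = 2 ^ m * 2 ^ (k - m) := by
    rw [← pow_add]; congr 1; omega
  rw [h2]
  have hm : ((2 : ℝ) ^ m) ≠ 0 := by positivity
  have hkm : ((2 : ℝ) ^ (k - m)) ≠ 0 := by positivity
  field_simp

/-- lower-left corner coordinates of box `(k, j)`. -/
def lo (c : Rn n) (r : ℝ) (k : ℕ) (j : Fin n → ℕ) (i : Fin n) : ℝ := c i - r + j i * sk r k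

/-- half-open dyadic box. -/
def box (c : Rn n) (r : ℝ) (k : ℕ) (j : Fin n → ℕ) : Set (Rn n) :=
  Set.pi Set.univ fun i => Set.Ico (lo c r k j i) (lo c r k j i + sk r k)

/-- center of box `(k,j)`. -/
def ctr (c : Rn n) (r : ℝ) (k : ℕ) (j : Fin n → ℕ) : Rn n := fun i => lo c r k j i + sk r k / 2

/-- corresponding closed cube. -/
def cube (c : Rn n) (r : ℝ) (k : ℕ) (j : Fin n → ℕ) : Set (Rn n) :=
  Metric.closedBall (ctr c r k j) (r / 2 ^ k)

lemma mem_box {c : Rn n} {r : ℝ} {k : ℕ} {j : Fin n → ℕ} {x : Rn n} :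
    x ∈ box c r k j ↔ ∀ i, lo c r k j i ≤ x i ∧ x i < lo c r k j i + sk r k := by
  simp [box, Set.mem_pi, Set.mem_Ico]

lemma cube_eq_pi {c : Rn n} {r : ℝ} (hr : 0 < r) (k : ℕ) (j : Fin n → ℕ) :
    cube c r k j = Set.pi Set.univ fun i => Set.Icc (lo c r k j i) (lo c r k j i + sk r k) := by
  unfold cube
  rw [closedBall_pi _ (by positivity : (0:ℝ) ≤ r / 2 ^ k)]
  refine Set.pi_congr rfl fun i _ => ?_
  rw [Real.closedBall_eq_Icc]
  have h1 : ctr c r k j i - r / 2 ^ k = lo c r k j i := by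
    unfold ctr sk; ring
  have h2 : ctr c r k j i + r / 2 ^ k = lo c r k j i + sk r k := by
    unfold ctr sk; ring
  rw [h1, h2]

lemma box_subset_cube {c : Rn n} {r : ℝ} (hr : 0 < r) (k : ℕ) (j : Fin n → ℕ) :
    box c r k j ⊆ cube c r k j := by
  rw [cube_eq_pi hr]
  exact Set.pi_mono fun i _ => Set.Ico_subset_Icc_self

lemma cube_diff_box_null {c : Rn n} {r : ℝ} (hr : 0 < r) (k : ℕ) (j : Fin n → ℕ) :
    volume (cube c r k j \ box c r k j) = 0 := by
  have hsub : cube c r k j \ box c r k j ⊆ ⋃ i, {x : Rn n | x i = lo c r k j i + sk r k} := by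
    rintro x ⟨hx1, hx2⟩
    rw [cube_eq_pi hr] at hx1
    simp only [Set.mem_pi, Set.mem_univ, forall_true_left, Set.mem_Icc] at hx1
    rw [mem_box] at hx2
    push_neg at hx2
    obtain ⟨i, hi⟩ := hx2
    have h1 := (hx1 i).1
    have h2 := (hx1 i).2
    have : x i = lo c r k j i + sk r k := le_antisymm h2 (hi h1)
    exact Set.mem_iUnion.2 ⟨i, this⟩
  exact measure_mono_null hsub (measure_iUnion_null fun i => hyperplane_null i _)

lemma box_ae_cube {c : Rn n} {r : ℝ} (hr : 0 < r) (k : ℕ) (j : Fin n → ℕ) :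
    box c r k j =ᶠ[ae volume] cube c r k j := by
  rw [MeasureTheory.ae_eq_set]
  constructor
  · rw [Set.diff_eq_empty.2 (box_subset_cube hr k j)]; simp
  · exact cube_diff_box_null hr k j

lemma volume_box {c : Rn n} {r : ℝ} (hr : 0 < r) (k : ℕ) (j : Fin n → ℕ) :
    volume (box c r k j) = ENNReal.ofReal (sk r k ^ n) := by
  unfold box
  rw [volume_pi_pi]
  have h : ∀ i : Fin n, volume (Set.Ico (lo c r k j i) (lo c r k j i + sk r k))
      = ENNReal.ofReal (sk r k) := by
    intro i
    rw [Real.volume_Ico]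
    congr 1
    ring
  rw [Finset.prod_congr rfl (fun i _ => h i), Finset.prod_const, Finset.card_univ,
    Fintype.card_fin, ← ENNReal.ofReal_pow (sk_pos hr k).le]

lemma volume_cube {c : Rn n} {r : ℝ} (hr : 0 < r) (k : ℕ) (j : Fin n → ℕ) :
    volume (cube c r k j) = ENNReal.ofReal (sk r k ^ n) := by
  rw [measure_congr (box_ae_cube hr k j).symm, volume_box hr]

lemma cube_zero {c : Rn n} {r : ℝ} : cube c r 0 (fun _ => 0) = Metric.closedBall c r := by
  unfold cube
  have h1 : ctr c r 0 (fun _ => 0) = c := by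
    funext i
    unfold ctr lo sk
    push_cast
    ring
  rw [h1]
  norm_num

lemma volume_closedBall' (c : Rn n) {r : ℝ} (hr : 0 < r) :
    volume (Metric.closedBall c r) = ENNReal.ofReal ((2 * r) ^ n) := by
  rw [← cube_zero (c := c) (r := r), volume_cube hr]
  congr 2
  unfold sk
  norm_num

lemma closedBall_diff_box_null {c : Rn n} {r : ℝ} (hr : 0 < r) :
    volume (Metric.closedBall c r \ box c r 0 (fun _ => 0)) = 0 := by
  rw [← cube_zero (c := c) (r := r)]
  exact cube_diff_box_null hr 0 _

/-- the dyadic chain selector. -/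
def phi (c : Rn n) (r : ℝ) (k : ℕ) (x : Rn n) : Fin n → ℕ :=
  fun i => ⌊(x i - (c i - r)) / sk r k⌋₊

lemma phi_eq_of_mem {c : Rn n} {r : ℝ} (hr : 0 < r) {k : ℕ} {j : Fin n → ℕ} {x : Rn n}
    (hx : x ∈ box c r k j) : phi c r k x = j := by
  funext i
  obtain ⟨h1, h2⟩ := mem_box.1 hx i
  have hs := sk_pos hr k
  unfold lo at h1 h2
  have hnn : 0 ≤ (x i - (c i - r)) / sk r k := by
    apply div_nonneg _ hs.le
    have : 0 ≤ (j i : ℝ) * sk r k := by positivity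
    linarith
  unfold phi
  rw [Nat.floor_eq_iff hnn]
  constructor
  · rw [le_div_iff₀ hs]; linarith
  · rw [div_lt_iff₀ hs]; push_cast; linarith

lemma mem_box_phi {c : Rn n} {r : ℝ} (hr : 0 < r) {x : Rn n}
    (hx : x ∈ box c r 0 (fun _ => 0)) (k : ℕ) :
    x ∈ box c r k (phi c r k x) ∧ ∀ i, phi c r k x i < 2 ^ k := by
  have hs := sk_pos hr k
  have hx' : ∀ i, c i - r ≤ x i ∧ x i < c i + r := by
    intro i
    obtain ⟨h1, h2⟩ := mem_box.1 hx i
    unfold lo sk at h1 h2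
    push_cast at h1 h2
    constructor <;> nlinarith
  constructor
  · rw [mem_box]
    intro i
    have ht : 0 ≤ (x i - (c i - r)) := by linarith [(hx' i).1]
    have htd : 0 ≤ (x i - (c i - r)) / sk r k := div_nonneg ht hs.le
    have hfl : (phi c r k x i : ℝ) ≤ (x i - (c i - r)) / sk r k := Nat.floor_le htd
    have hfu : (x i - (c i - r)) / sk r k < phi c r k x i + 1 := Nat.lt_floor_add_one _
    unfold lo
    constructor
    · have := (mul_le_mul_of_nonneg_right hfl hs.le)
      rw [div_mul_cancel₀ _ hs.ne'] at this
      linarith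
    · have := (mul_lt_mul_of_pos_right hfu hs)
      rw [div_mul_cancel₀ _ hs.ne'] at this
      nlinarith
  · intro i
    have ht : 0 ≤ (x i - (c i - r)) := by linarith [(hx' i).1]
    have htd : 0 ≤ (x i - (c i - r)) / sk r k := div_nonneg ht hs.le
    unfold phi
    rw [Nat.floor_lt htd]
    rw [div_lt_iff₀ hs]
    have h2 : ((2 : ℕ) ^ k : ℝ) * sk r k = 2 * r := by
      unfold sk; push_cast; field_simp
    push_cast at h2 ⊢
    rw [h2]
    linarith [(hx' i).2]

lemma phi_div {c : Rn n} {r : ℝ} (hr : 0 < r) {m k : ℕ} (hmk : m ≤ k) {x : Rn n}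
    (hx : ∀ i, c i - r ≤ x i) (i : Fin n) :
    phi c r m x i = phi c r k x i / 2 ^ (k - m) := by
  have hsf : sk r m = (2 : ℝ) ^ (k - m) * sk r k := sk_factor hmk
  have harg : (x i - (c i - r)) / sk r m
      = ((x i - (c i - r)) / sk r k) / ((2 ^ (k - m) : ℕ) : ℝ) := by
    rw [hsf]; push_cast; ring
  unfold phi
  rw [harg, Nat.floor_div_natCast]

lemma box_subset_box {c : Rn n} {r : ℝ} (hr : 0 < r) {m k : ℕ} (hmk : m ≤ k) (j : Fin n → ℕ) :
    box c r k j ⊆ box c r m (fun i => j i / 2 ^ (k - m)) := by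
  intro x hx
  rw [mem_box] at hx ⊢
  intro i
  obtain ⟨h1, h2⟩ := hx i
  have hs := sk_pos hr k
  have hsf : sk r m = (2 : ℝ) ^ (k - m) * sk r k := sk_factor hmk
  set d := k - m with hd
  set q := j i / 2 ^ d with hq
  have hq1 : q * 2 ^ d ≤ j i := Nat.div_mul_le_self _ _
  have hq2 : j i + 1 ≤ (q + 1) * 2 ^ d := by
    have h2 : j i < (q + 1) * 2 ^ d :=
      (Nat.div_lt_iff_lt_mul (by positivity : 0 < 2 ^ d)).1 (Nat.lt_succ_self q)
    omega
  have r1 : (q : ℝ) * 2 ^ d ≤ (j i : ℝ) := by exact_mod_cast hq1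
  have r2 : (j i : ℝ) + 1 ≤ ((q : ℝ) + 1) * 2 ^ d := by exact_mod_cast hq2
  unfold lo at h1 h2 ⊢
  rw [hsf]
  constructor
  · nlinarith
  · nlinarith

lemma box_subset_closedBall {c : Rn n} {r : ℝ} (hr : 0 < r) {k : ℕ} {j : Fin n → ℕ}
    (hv : ∀ i, j i < 2 ^ k) : box c r k j ⊆ Metric.closedBall c r := by
  have h1 := box_subset_box (c := c) hr (Nat.zero_le k) j
  have h2 : (fun i => j i / 2 ^ (k - 0)) = (fun _ => 0 : Fin n → ℕ) := by
    funext i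
    simp only [Nat.sub_zero]
    exact Nat.div_eq_of_lt (hv i)
  rw [h2] at h1
  refine h1.trans ?_
  rw [← cube_zero (c := c) (r := r)]
  exact box_subset_cube hr 0 _

end CZAux

namespace CZAux2

open Metric Set Filter Topology CZAux

variable {n : ℕ}

/-- the set whose sup defines `maximalFn f x`. -/
def maxSet (f : Rn n → ℝ) (x : Rn n) : Set ℝ :=
  {a | ∃ Q : Set (Rn n), IsCube Q ∧ x ∈ Q ∧ a = avgOn Q (fun y => |f y|)}

lemma maximalFn_eq (f : Rn n → ℝ) (x : Rn n) : maximalFn f x = sSup (maxSet f x) := rfl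

lemma vol_closedBall (z : Rn n) {ρ : ℝ} (hρ : 0 < ρ) :
    vol (Metric.closedBall z ρ) = (2 * ρ) ^ n := by
  rw [vol, volume_closedBall' z hρ, ENNReal.toReal_ofReal (by positivity)]

/-- Almost every point has a bounded family of cube-averages of an integrable
nonnegative function: `maximalFn`'s defining set is a.e. bounded above. -/
lemma bddAbove_ae (F : Rn n → ℝ) (hF : Integrable F volume) (hF0 : ∀ x, 0 ≤ F x) :
    ∀ᵐ x ∂(volume : Measure (Rn n)), BddAbove (maxSet F x) := by
  have hloc : LocallyIntegrable F volume := hF.locallyIntegrable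
  filter_upwards [IsUnifLocDoublingMeasure.ae_tendsto_average
    (μ := (volume : Measure (Rn n))) hloc 1] with x hx
  have hten : Tendsto (fun ρ : ℝ => ⨍ y in closedBall x ρ, F y) (𝓝[>] (0:ℝ)) (𝓝 (F x)) := by
    refine hx (fun _ => x) id tendsto_id ?_
    filter_upwards [self_mem_nhdsWithin] with ρ hρ
    have hρ' : (0:ℝ) < ρ := hρ
    rw [one_mul]
    exact mem_closedBall_self hρ'.le
  have h2 : ∀ᶠ ρ in 𝓝[>] (0:ℝ), ⨍ y in closedBall x ρ, F y < F x + 1 :=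
    hten.eventually (Iio_mem_nhds (lt_add_one (F x)))
  obtain ⟨u, hu, hsub⟩ := mem_nhdsGT_iff_exists_Ioo_subset.1 h2
  have hu0 : (0:ℝ) < u := hu
  have hC0 : 0 ≤ ∫ y, F y := integral_nonneg hF0
  have hFabs : (fun y => |F y|) = F := funext fun y => abs_of_nonneg (hF0 y)
  refine ⟨max ((2:ℝ) ^ n * (F x + 1)) ((∫ y, F y) / u ^ n * 2 ^ n), ?_⟩
  rintro a ⟨Q', ⟨z, ρ, hρ, rfl⟩, hxQ', rfl⟩
  rw [avgOn, hFabs, vol_closedBall z hρ]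
  have hIs : ∀ s : Set (Rn n), ∫ y in s, F y ≤ ∫ y, F y :=
    fun s => setIntegral_le_integral hF (ae_of_all _ hF0)
  by_cases hcase : 2 * ρ < u
  · -- small radius: compare with the centered ball of radius 2ρ
    have hsubB : closedBall z ρ ⊆ closedBall x (2 * ρ) := by
      intro y hy
      have h1 : dist y z ≤ ρ := mem_closedBall.1 hy
      have h2 : dist x z ≤ ρ := mem_closedBall.1 hxQ'
      have := dist_triangle_right y x z
      rw [mem_closedBall]
      linarith
    have hmono : ∫ y in closedBall z ρ, F y ≤ ∫ y in closedBall x (2 * ρ), F y :=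
      setIntegral_mono_set hF.integrableOn (ae_of_all _ hF0)
        (HasSubset.Subset.eventuallyLE hsubB)
    have havg : ⨍ y in closedBall x (2 * ρ), F y < F x + 1 := hsub ⟨by positivity, hcase⟩
    have hveq : ⨍ y in closedBall x (2 * ρ), F y
        = ((2 * (2 * ρ)) ^ n)⁻¹ * ∫ y in closedBall x (2 * ρ), F y := by
      rw [setAverage_eq, smul_eq_mul]
      congr 2
      rw [measureReal_def, ← vol, vol_closedBall x (by positivity)]
    refine le_trans ?_ (le_max_left _ _)
    have hInn : 0 ≤ ∫ y in closedBall x (2 * ρ), F y :=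
      setIntegral_nonneg measurableSet_closedBall fun y _ => hF0 y
    calc ((2 * ρ) ^ n)⁻¹ * ∫ y in closedBall z ρ, F y
        ≤ ((2 * ρ) ^ n)⁻¹ * ∫ y in closedBall x (2 * ρ), F y := by
          apply mul_le_mul_of_nonneg_left hmono (by positivity)
      _ = 2 ^ n * (((2 * (2 * ρ)) ^ n)⁻¹ * ∫ y in closedBall x (2 * ρ), F y) := by
          rw [mul_pow]
          have hne1 : ((2:ℝ) * ρ) ^ n ≠ 0 := by positivity
          have hne2 : ((2:ℝ)) ^ n ≠ 0 := by positivity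
          field_simp
          rw [← pow_mul, mul_comm n 2, pow_mul, show (2:ℝ) ^ 2 = 4 by norm_num, mul_pow]
          ring
      _ ≤ 2 ^ n * (F x + 1) := by
          rw [← hveq]
          exact mul_le_mul_of_nonneg_left havg.le (by positivity)
  · -- large radius
    push_neg at hcase
    refine le_trans ?_ (le_max_right _ _)
    have h1 : u ^ n ≤ (2 * ρ) ^ n := pow_le_pow_left₀ hu0.le hcase n
    have h2 : ((2 * ρ) ^ n)⁻¹ ≤ (u ^ n)⁻¹ := by
      apply inv_anti₀ (by positivity) h1
    have h3 : 0 ≤ ∫ y in closedBall z ρ, F y :=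
      setIntegral_nonneg measurableSet_closedBall fun y _ => hF0 y
    calc ((2 * ρ) ^ n)⁻¹ * ∫ y in closedBall z ρ, F y
        ≤ (u ^ n)⁻¹ * ∫ y, F y := by
          apply mul_le_mul h2 (hIs _) h3 (by positivity)
      _ = (∫ y, F y) / u ^ n := by rw [← div_eq_inv_mul]
      _ ≤ (∫ y, F y) / u ^ n * 2 ^ n := by
          nlinarith [div_nonneg hC0 (by positivity : (0:ℝ) ≤ u ^ n),
            one_le_pow₀ (by norm_num : (1:ℝ) ≤ 2) (n := n)]

/-- Lebesgue differentiation along the dyadic chain of cubes containing `x`. -/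
lemma ae_chain (w : Rn n → ℝ) (hwl : LocallyIntegrable w volume) (c : Rn n) {r : ℝ}
    (hr : 0 < r) :
    ∀ᵐ x ∂(volume : Measure (Rn n)), x ∈ box c r 0 (fun _ => 0) →
      Tendsto (fun k : ℕ => ⨍ y in cube c r k (phi c r k x), w y) atTop (𝓝 (w x)) := by
  filter_upwards [IsUnifLocDoublingMeasure.ae_tendsto_average
    (μ := (volume : Measure (Rn n))) hwl 1] with x hx hx0
  have hδ : Tendsto (fun k : ℕ => r / 2 ^ k) atTop (𝓝[>] (0:ℝ)) := by
    refine tendsto_nhdsWithin_of_tendsto_nhds_of_eventually_within _ ?_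
      (Eventually.of_forall fun k => Set.mem_Ioi.2 (by positivity))
    have h : Tendsto (fun k : ℕ => r * (1/2 : ℝ) ^ k) atTop (𝓝 (r * 0)) :=
      (tendsto_pow_atTop_nhds_zero_of_lt_one (by norm_num) (by norm_num)).const_mul r
    rw [mul_zero] at h
    refine h.congr fun k => ?_
    rw [div_pow, one_pow]
    ring
  have hmem : ∀ᶠ k : ℕ in atTop,
      x ∈ closedBall (ctr c r k (phi c r k x)) (1 * (r / 2 ^ k)) := by
    refine Eventually.of_forall fun k => ?_
    rw [one_mul]
    exact box_subset_cube hr _ _ (mem_box_phi hr hx0 k).1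
  exact hx (fun k : ℕ => ctr c r k (phi c r k x)) (fun k : ℕ => r / 2 ^ k) hδ hmem

end CZAux2

namespace CZAux3

open Metric Set Filter Topology CZAux CZAux2
open scoped ENNReal NNReal

variable {n : ℕ}

/-- The Calderón–Zygmund estimate: the super-level mass of `w` on `Q` is controlled by
`2^n λ` times the measure of the super-level set of the local maximal function. -/
lemma cz (w : Rn n → ℝ) (hw0 : ∀ x, 0 ≤ w x)
    (hwl : LocallyIntegrable w volume) (c : Rn n) {r : ℝ} (hr : 0 < r)
    {lam : ℝ} (hlam0 : 0 < lam)
    (hlamW : intOn w (Metric.closedBall c r) ≤ lam * (2 * r) ^ n) :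
    ∫⁻ x in Metric.closedBall c r ∩ {y | lam < w y}, ENNReal.ofReal (w x)
      ≤ ENNReal.ofReal lam * 2 ^ n *
        (volume.restrict (Metric.closedBall c r))
          {x | lam < maximalFn ((Metric.closedBall c r).indicator w) x} := by
  set Q := Metric.closedBall c r with hQdef
  set M := maximalFn (Q.indicator w) with hMdef
  have hQmeas : MeasurableSet Q := measurableSet_closedBall
  have hIw : IntegrableOn w Q volume := hwl.integrableOn_isCompact (isCompact_closedBall c r)
  set S : Set (ℕ × (Fin n → ℕ)) :=
    {p | (∀ i, p.2 i < 2 ^ p.1) ∧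
      (lam * sk r p.1 ^ n < ∫ x in box c r p.1 p.2, w x) ∧
      ∀ m, m < p.1 →
        ¬ (lam * sk r m ^ n < ∫ x in box c r m (fun i => p.2 i / 2 ^ (p.1 - m)), w x)}
    with hSdef
  have hvalid : ∀ p ∈ S, box c r p.1 p.2 ⊆ Q := fun p hp => box_subset_closedBall hr hp.1
  have hIbox : ∀ p ∈ S, IntegrableOn w (box c r p.1 p.2) volume :=
    fun p hp => hIw.mono_set (hvalid p hp)
  -- the stopping bound coming from the parent cube
  have hkey : ∀ p ∈ S, ∫ x in box c r p.1 p.2, w x ≤ 2 ^ n * (lam * sk r p.1 ^ n) := by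
    rintro ⟨k, j⟩ hp
    obtain ⟨hval, hP, hmin⟩ := hp
    dsimp only at hval hP hmin ⊢
    cases k with
    | zero =>
      exfalso
      have hj : j = fun _ => 0 := funext fun i => by have := hval i; simp at this; omega
      have heq : ∫ x in box c r 0 j, w x = intOn w Q := by
        rw [hj, intOn]
        refine setIntegral_congr_set ?_
        have h := box_ae_cube hr 0 (fun _ => (0:ℕ)) (c := c)
        rwa [cube_zero] at h
      have hsk : sk r 0 = 2 * r := by unfold sk; norm_num
      rw [heq, hsk] at hP
      linarith
    | succ k' =>
      have hpar := hmin k' (Nat.lt_succ_self k')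
      have hparval : ∀ i, j i / 2 ^ (k' + 1 - k') < 2 ^ k' := by
        intro i
        have h1 := hval i
        have h2 : k' + 1 - k' = 1 := by omega
        rw [h2, pow_one]
        have h3 : (2:ℕ) ^ (k' + 1) = 2 ^ k' * 2 := by rw [pow_succ]
        rw [h3] at h1
        exact Nat.div_lt_of_lt_mul (by omega)
      have hsub := box_subset_box (c := c) hr (Nat.le_succ k') j
      have hmono : ∫ x in box c r (k' + 1) j, w x
          ≤ ∫ x in box c r k' (fun i => j i / 2 ^ (k' + 1 - k')), w x :=
        setIntegral_mono_set (hIw.mono_set (box_subset_closedBall hr hparval))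
          (ae_of_all _ fun x => hw0 x) (HasSubset.Subset.eventuallyLE hsub)
      have hnotP : ∫ x in box c r k' (fun i => j i / 2 ^ (k' + 1 - k')), w x
          ≤ lam * sk r k' ^ n := not_lt.1 hpar
      have hsk : sk r k' = 2 * sk r (k' + 1) := by
        rw [sk_factor (r := r) (Nat.le_succ k')]
        congr 1
        rw [show k' + 1 - k' = 1 by omega, pow_one]
      calc ∫ x in box c r (k' + 1) j, w x ≤ lam * sk r k' ^ n := le_trans hmono hnotP
        _ = 2 ^ n * (lam * sk r (k' + 1) ^ n) := by rw [hsk, mul_pow]; ring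
  set G : Set (Rn n) := ⋃ p ∈ S, box c r p.1 p.2 with hGdef
  have hGQ : G ⊆ Q := Set.iUnion₂_subset hvalid
  have hboxmeas : ∀ (k : ℕ) (j : Fin n → ℕ), MeasurableSet (box c r k j) :=
    fun k j => MeasurableSet.univ_pi fun i => measurableSet_Ico
  have hSc : S.Countable := Set.to_countable S
  haveI hScc : Countable ↑S := hSc.to_subtype
  have hGiUnion : G = ⋃ p : S, box c r (p : ℕ × (Fin n → ℕ)).1 (p : ℕ × (Fin n → ℕ)).2 := by
    rw [hGdef, Set.biUnion_eq_iUnion]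
  have hGmeas : MeasurableSet G := by
    rw [hGiUnion]; exact MeasurableSet.iUnion fun p => hboxmeas _ _
  -- disjointness of the stopping boxes
  have hdisjkey : ∀ k j k' j', (k, j) ∈ S → (k', j') ∈ S → k ≤ k' → ∀ x : Rn n,
      x ∈ box c r k j → x ∈ box c r k' j' → k = k' ∧ j = j' := by
    intro k j k' j' hp hq hkk x hx hx'
    have hj : phi c r k x = j := phi_eq_of_mem hr hx
    have hj' : phi c r k' x = j' := phi_eq_of_mem hr hx'
    have hlow : ∀ i, c i - r ≤ x i := by
      intro i
      have h1 := (mem_box.1 hx i).1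
      unfold lo at h1
      have h0 : 0 ≤ (j i : ℝ) * sk r k :=
        mul_nonneg (Nat.cast_nonneg _) (sk_pos hr k).le
      linarith
    rcases eq_or_lt_of_le hkk with heq | hlt
    · subst heq
      exact ⟨rfl, by rw [← hj, hj']⟩
    · exfalso
      apply hq.2.2 k hlt
      have hdiv : (fun i => j' i / 2 ^ (k' - k)) = j := by
        funext i
        rw [← hj', ← hj]
        exact (phi_div hr hlt.le hlow i).symm
      rw [hdiv]
      exact hp.2.1
  have hdisj : Pairwise (Function.onFun Disjoint
      fun p : S => box c r (p : ℕ × (Fin n → ℕ)).1 (p : ℕ × (Fin n → ℕ)).2) := by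
    rintro ⟨⟨k, j⟩, hp⟩ ⟨⟨k', j'⟩, hq⟩ hne
    refine Set.disjoint_left.2 fun x hx hx' => hne ?_
    rcases le_total k k' with h | h
    · obtain ⟨h1, h2⟩ := hdisjkey k j k' j' hp hq h x hx hx'
      exact Subtype.ext (by rw [Prod.mk.injEq]; exact ⟨h1, h2⟩)
    · obtain ⟨h1, h2⟩ := hdisjkey k' j' k j hq hp h x hx' hx
      exact Subtype.ext (by rw [Prod.mk.injEq]; exact ⟨h1.symm, h2.symm⟩)
  -- a.e. covering of the super-level set by stopping boxes
  have hcover : volume ((Q ∩ {y | lam < w y}) \ G) = 0 := by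
    have hae := ae_chain w hwl c hr
    have hN2 : volume {x : Rn n | ¬ (x ∈ box c r 0 (fun _ => 0) →
        Tendsto (fun k : ℕ => ⨍ y in cube c r k (phi c r k x), w y) atTop (𝓝 (w x)))} = 0 :=
      ae_iff.1 hae
    refine measure_mono_null ?_
      (measure_union_null (closedBall_diff_box_null (c := c) hr) hN2)
    rintro x ⟨⟨hxQ, hxw⟩, hxG⟩
    by_cases hx0 : x ∈ box c r 0 (fun _ => 0)
    · by_cases hten : Tendsto (fun k : ℕ => ⨍ y in cube c r k (phi c r k x), w y)
          atTop (𝓝 (w x))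
      · exfalso
        apply hxG
        have hxw' : lam < w x := hxw
        have havgeq : ∀ k : ℕ, ⨍ y in cube c r k (phi c r k x), w y
            = (sk r k ^ n)⁻¹ * ∫ y in box c r k (phi c r k x), w y := by
          intro k
          rw [setAverage_eq, measureReal_def, volume_cube hr,
            ENNReal.toReal_ofReal (pow_nonneg (sk_pos hr k).le n), smul_eq_mul,
            setIntegral_congr_set (box_ae_cube hr k _).symm]
        have hex : ∃ k, lam * sk r k ^ n < ∫ y in box c r k (phi c r k x), w y := by
          obtain ⟨k, hk⟩ := (hten.eventually (Ioi_mem_nhds hxw')).exists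
          refine ⟨k, ?_⟩
          have hk' : lam < (sk r k ^ n)⁻¹ * ∫ y in box c r k (phi c r k x), w y := by
            rw [← havgeq k]; exact hk
          rw [← div_eq_inv_mul] at hk'
          exact (lt_div_iff₀ (pow_pos (sk_pos hr k) n)).1 hk'
        have hmem := (mem_box_phi hr hx0 (Nat.find hex)).1
        have hval := (mem_box_phi hr hx0 (Nat.find hex)).2
        have hlow : ∀ i, c i - r ≤ x i := by
          intro i
          have h1 := (mem_box.1 hx0 i).1
          unfold lo at h1
          have h0 : (((fun _ => (0:ℕ)) i : ℕ) : ℝ) * sk r 0 = 0 := by norm_num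
          linarith
        refine Set.mem_biUnion
          (show (Nat.find hex, phi c r (Nat.find hex) x) ∈ S from
            ⟨hval, Nat.find_spec hex, ?_⟩) hmem
        intro m hm
        have heqphi : (fun i => phi c r (Nat.find hex) x i / 2 ^ (Nat.find hex - m))
            = phi c r m x := funext fun i => (phi_div hr hm.le hlow i).symm
        rw [heqphi]
        exact Nat.find_min hex hm
      · exact Or.inr (fun h => hten (h hx0))
    · exact Or.inl ⟨hxQ, hx0⟩
  -- the junk set where the sup is not attained is null
  have hJ : volume {x : Rn n | ¬ BddAbove (maxSet (Q.indicator w) x)} = 0 :=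
    ae_iff.1 (bddAbove_ae (Q.indicator w) ((integrable_indicator_iff hQmeas).2 hIw)
      (fun x => Set.indicator_nonneg (fun y _ => hw0 y) x))
  obtain ⟨J', hJ'sub, hJ'meas, hJ'0⟩ := exists_measurable_superset_of_null hJ
  have hGJ : G \ J' ⊆ {x | lam < M x} := by
    rintro x ⟨hxG, hxJ⟩
    obtain ⟨p, hp, hxp⟩ := Set.mem_iUnion₂.1 hxG
    have hbdd : BddAbove (maxSet (Q.indicator w) x) := by
      by_contra hc
      exact hxJ (hJ'sub hc)
    have hxD : x ∈ cube c r p.1 p.2 := box_subset_cube hr _ _ hxp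
    have havg : lam < avgOn (cube c r p.1 p.2) (fun y => |Q.indicator w y|) := by
      have hvolD : vol (cube c r p.1 p.2) = sk r p.1 ^ n := by
        rw [vol, volume_cube hr, ENNReal.toReal_ofReal (pow_nonneg (sk_pos hr _).le n)]
      have habs : ∫ y in cube c r p.1 p.2, |Q.indicator w y|
          = ∫ y in cube c r p.1 p.2 ∩ Q, w y := by
        rw [← setIntegral_indicator hQmeas]
        exact setIntegral_congr_fun measurableSet_closedBall
          fun y _ => abs_of_nonneg (Set.indicator_nonneg (fun z _ => hw0 z) y)
      have hmono2 : ∫ y in box c r p.1 p.2, w y ≤ ∫ y in cube c r p.1 p.2 ∩ Q, w y :=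
        setIntegral_mono_set (hIw.mono_set Set.inter_subset_right)
          (ae_of_all _ fun y => hw0 y)
          (HasSubset.Subset.eventuallyLE
            (Set.subset_inter (box_subset_cube hr _ _) (hvalid p hp)))
      rw [avgOn, hvolD, habs, ← div_eq_inv_mul, lt_div_iff₀ (pow_pos (sk_pos hr _) n)]
      calc lam * sk r p.1 ^ n < ∫ y in box c r p.1 p.2, w y := hp.2.1
        _ ≤ _ := hmono2
    have hle : avgOn (cube c r p.1 p.2) (fun y => |Q.indicator w y|) ≤ M x := by
      rw [hMdef, maximalFn_eq]
      exact le_csSup hbdd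
        ⟨cube c r p.1 p.2, ⟨ctr c r p.1 p.2, r / 2 ^ p.1, by positivity, rfl⟩, hxD, rfl⟩
    exact lt_of_lt_of_le havg hle
  have hGvol : volume G ≤ (volume.restrict Q) {x | lam < M x} := by
    have h1 : volume G ≤ volume (G \ J') := by
      calc volume G = volume ((G \ J') ∪ (G ∩ J')) := by rw [Set.diff_union_inter]
        _ ≤ volume (G \ J') + volume (G ∩ J') := measure_union_le _ _
        _ = volume (G \ J') := by
            rw [measure_mono_null Set.inter_subset_right hJ'0, add_zero]
    have h2 : volume (G \ J') = (volume.restrict Q) (G \ J') := by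
      rw [Measure.restrict_apply (hGmeas.diff hJ'meas),
        Set.inter_eq_left.2 ((Set.diff_subset).trans hGQ)]
    rw [h2] at h1
    exact h1.trans (measure_mono hGJ)
  -- put everything together
  calc ∫⁻ x in Q ∩ {y | lam < w y}, ENNReal.ofReal (w x)
      ≤ ∫⁻ x in G ∪ ((Q ∩ {y | lam < w y}) \ G), ENNReal.ofReal (w x) := by
        refine lintegral_mono' (Measure.restrict_mono ?_ le_rfl) le_rfl
        intro x hx
        by_cases h : x ∈ G
        · exact Or.inl h
        · exact Or.inr ⟨hx, h⟩
    _ ≤ (∫⁻ x in G, ENNReal.ofReal (w x))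
        + ∫⁻ x in (Q ∩ {y | lam < w y}) \ G, ENNReal.ofReal (w x) :=
        lintegral_union_le _ _ _
    _ = ∫⁻ x in G, ENNReal.ofReal (w x) := by
        rw [setLIntegral_measure_zero _ _ hcover, add_zero]
    _ = ∑' p : S, ∫⁻ x in box c r (p : ℕ × (Fin n → ℕ)).1 (p : ℕ × (Fin n → ℕ)).2,
          ENNReal.ofReal (w x) := by
        rw [hGiUnion, lintegral_iUnion (fun p => hboxmeas _ _) hdisj]
    _ ≤ ∑' p : S, ENNReal.ofReal lam * 2 ^ n *
          volume (box c r (p : ℕ × (Fin n → ℕ)).1 (p : ℕ × (Fin n → ℕ)).2) := by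
        refine ENNReal.tsum_le_tsum fun p => ?_
        have h1 : ∫⁻ x in box c r (p : ℕ × (Fin n → ℕ)).1 (p : ℕ × (Fin n → ℕ)).2,
            ENNReal.ofReal (w x)
            = ENNReal.ofReal (∫ x in box c r (p : ℕ × (Fin n → ℕ)).1
                (p : ℕ × (Fin n → ℕ)).2, w x) :=
          (ofReal_integral_eq_lintegral_ofReal (hIbox _ p.2)
            (ae_of_all _ fun x => hw0 x)).symm
        rw [h1, volume_box hr]
        calc ENNReal.ofReal (∫ x in box c r (p : ℕ × (Fin n → ℕ)).1
              (p : ℕ × (Fin n → ℕ)).2, w x)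
            ≤ ENNReal.ofReal (2 ^ n * (lam * sk r (p : ℕ × (Fin n → ℕ)).1 ^ n)) :=
              ENNReal.ofReal_le_ofReal (hkey _ p.2)
          _ = ENNReal.ofReal lam * 2 ^ n
              * ENNReal.ofReal (sk r (p : ℕ × (Fin n → ℕ)).1 ^ n) := by
              rw [ENNReal.ofReal_mul (by positivity : (0:ℝ) ≤ (2:ℝ) ^ n),
                ENNReal.ofReal_mul hlam0.le,
                ENNReal.ofReal_pow (by norm_num : (0:ℝ) ≤ 2)]
              rw [show ENNReal.ofReal (2:ℝ) = (2 : ℝ≥0∞) by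
                simp [ENNReal.ofReal_ofNat]]
              ring
    _ = ENNReal.ofReal lam * 2 ^ n * volume G := by
        rw [hGiUnion, measure_iUnion hdisj (fun p => hboxmeas _ _), ENNReal.tsum_mul_left]
    _ ≤ _ := mul_le_mul_right hGvol _

end CZAux3

namespace CZAux4

open Metric Set Filter Topology CZAux CZAux2 CZAux3
open scoped ENNReal NNReal

variable {n : ℕ}

/-- Core local estimate: for measurable `w`, the weighted oscillation of `log w` on a cube
is at most `2^(n+1)` times the Fujii–Wilson defect of the cube. -/
lemma core (w : Rn n → ℝ) (hwm : Measurable w) (hw0 : ∀ x, 0 ≤ w x)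
    (hwpos : ∀ᵐ x ∂(volume : Measure (Rn n)), 0 < w x)
    (hwl : LocallyIntegrable w volume) (c : Rn n) {r : ℝ} (hr : 0 < r)
    (hWpos : 0 < intOn w (Metric.closedBall c r))
    (hM : IntegrableOn (maximalFn ((Metric.closedBall c r).indicator w))
      (Metric.closedBall c r) volume)
    (hlogint : IntegrableOn (fun x => Real.log (w x) * w x)
      (Metric.closedBall c r) volume) :
    (∫ x in Metric.closedBall c r,
        |Real.log (w x) - wavgOn w (Metric.closedBall c r) (fun y => Real.log (w y))| * w x)
      ≤ 2 ^ (n + 1) *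
        ((∫ x in Metric.closedBall c r,
            maximalFn ((Metric.closedBall c r).indicator w) x)
          - intOn w (Metric.closedBall c r))
    ∧ intOn w (Metric.closedBall c r)
        ≤ ∫ x in Metric.closedBall c r,
            maximalFn ((Metric.closedBall c r).indicator w) x := by
  set Q := Metric.closedBall c r with hQdef
  set M := maximalFn (Q.indicator w) with hMdef
  have hQmeas : MeasurableSet Q := measurableSet_closedBall
  have hIw : IntegrableOn w Q volume := hwl.integrableOn_isCompact (isCompact_closedBall c r)
  set W := intOn w Q with hWdef
  have hWint : ∫ x in Q, w x = W := by rw [hWdef, intOn]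
  have hWne : W ≠ 0 := ne_of_gt hWpos
  set V : ℝ := (2 * r) ^ n with hVdef
  have hV0 : 0 < V := by positivity
  have hVolQ : volume Q = ENNReal.ofReal V := volume_closedBall' c hr
  have hvQ : (volume Q).toReal = V := by rw [hVolQ, ENNReal.toReal_ofReal hV0.le]
  have hvolQV : vol Q = V := by rw [vol, hVolQ, ENNReal.toReal_ofReal hV0.le]
  set a := avgOn Q w with ha
  have haW : a = V⁻¹ * W := by rw [ha, avgOn, hvolQV, hWdef, intOn]
  have ha0 : 0 < a := by rw [haW]; positivity
  have haV : a * V = W := by rw [haW]; field_simp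
  have hVfin : volume Q < ⊤ := by rw [hVolQ]; exact ENNReal.ofReal_lt_top
  have hconstA : IntegrableOn (fun _ : Rn n => a) Q volume :=
    integrableOn_const hVfin.ne
  -- a.e. lower bound a ≤ M on Q
  have hMa : ∀ᵐ x ∂(volume.restrict Q), a ≤ M x := by
    have hbdd := bddAbove_ae (Q.indicator w) ((integrable_indicator_iff hQmeas).2 hIw)
      (fun x => Set.indicator_nonneg (fun y _ => hw0 y) x)
    have havg : avgOn Q (fun y => |Q.indicator w y|) = a := by
      rw [ha, avgOn, avgOn]
      congr 1
      refine setIntegral_congr_fun hQmeas fun y hy => ?_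
      rw [abs_of_nonneg (Set.indicator_nonneg (fun z _ => hw0 z) y),
        Set.indicator_of_mem hy]
    have h1 : ∀ᵐ x ∂(volume : Measure (Rn n)), x ∈ Q → a ≤ M x := by
      filter_upwards [hbdd] with x hx hxQ
      have hmem : a ∈ maxSet (Q.indicator w) x := ⟨Q, ⟨c, r, hr, rfl⟩, hxQ, havg.symm⟩
      exact le_csSup hx hmem
    exact (ae_restrict_iff' hQmeas).2 h1
  have hpart2 : W ≤ ∫ x in Q, M x := by
    have h1 : ∫ x in Q, (fun _ => a) x ∂volume ≤ ∫ x in Q, M x :=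
      integral_mono_ae hconstA hM hMa
    have h2 : ∫ x in Q, (fun _ => a) x ∂volume = (volume Q).toReal • a := setIntegral_const a
    rw [h2, hvQ, smul_eq_mul] at h1
    linarith [haV]
  -- Stage 1 : reduce to the positive part against the level log a
  set m := wavgOn w Q (fun y => Real.log (w y)) with hm
  have hIlw : IntegrableOn (fun x => Real.log (w x) * w x) Q volume := hlogint
  have hm' : m = W⁻¹ * ∫ x in Q, Real.log (w x) * w x := by rw [hm, wavgOn, hWdef]
  have hIfm : IntegrableOn (fun x => (Real.log (w x) - m) * w x) Q volume := by
    have h1 : (fun x => (Real.log (w x) - m) * w x)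
        = fun x => Real.log (w x) * w x - m * w x := funext fun x => by ring
    rw [h1]; exact hIlw.sub (hIw.const_mul m)
  have hmean : ∫ x in Q, (Real.log (w x) - m) * w x = 0 := by
    have h1 : (fun x => (Real.log (w x) - m) * w x)
        = fun x => Real.log (w x) * w x - m * w x := funext fun x => by ring
    rw [h1, integral_sub hIlw (hIw.const_mul m), integral_const_mul, hWint, hm']
    field_simp
    ring
  have hIla : IntegrableOn (fun x => (Real.log (w x) - Real.log a) * w x) Q volume := by
    have h1 : (fun x => (Real.log (w x) - Real.log a) * w x)
        = fun x => Real.log (w x) * w x - Real.log a * w x := funext fun x => by ring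
    rw [h1]; exact hIlw.sub (hIw.const_mul _)
  have hma : Real.log a ≤ m := by
    have hpt : ∀ᵐ x ∂(volume.restrict Q),
        w x - a ≤ (Real.log (w x) - Real.log a) * w x := by
      filter_upwards [ae_restrict_of_ae hwpos] with x hx
      have h1 : Real.log (a / w x) ≤ a / w x - 1 :=
        Real.log_le_sub_one_of_pos (by positivity)
      have h2 : Real.log (a / w x) = Real.log a - Real.log (w x) :=
        Real.log_div (ne_of_gt ha0) (ne_of_gt hx)
      rw [h2] at h1
      have h3 : (1 - a / w x) * w x ≤ (Real.log (w x) - Real.log a) * w x := by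
        apply mul_le_mul_of_nonneg_right _ (hw0 x)
        linarith
      have h4 : (1 - a / w x) * w x = w x - a := by field_simp
      linarith
    have h5 : ∫ x in Q, (w x - a) ≤ ∫ x in Q, (Real.log (w x) - Real.log a) * w x :=
      integral_mono_ae (hIw.sub hconstA) hIla hpt
    have h6 : ∫ x in Q, (w x - a) = 0 := by
      rw [integral_sub hIw hconstA, hWint]
      have h2 : ∫ x in Q, (fun _ => a) x ∂volume = (volume Q).toReal • a := setIntegral_const a
      rw [h2, hvQ, smul_eq_mul]
      linarith [haV]
    have h7 : ∫ x in Q, (Real.log (w x) - Real.log a) * w x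
        = (∫ x in Q, Real.log (w x) * w x) - Real.log a * W := by
      have h1 : (fun x => (Real.log (w x) - Real.log a) * w x)
          = fun x => Real.log (w x) * w x - Real.log a * w x := funext fun x => by ring
      rw [h1, integral_sub hIlw (hIw.const_mul _), integral_const_mul, hWint]
    rw [hm', ← div_eq_inv_mul, le_div_iff₀ hWpos]
    linarith
  set Gf : Rn n → ℝ := fun x => max ((Real.log (w x) - Real.log a) * w x) 0 with hGfdef
  have hIG : IntegrableOn Gf Q volume := by
    have h1 := hIla.pos_part
    have h2 : (fun x => ((Real.log (w x) - Real.log a) * w x) ⊔ 0) = Gf :=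
      funext fun x => by rfl
    rwa [h2] at h1
  have hIfmp : IntegrableOn (fun x => max ((Real.log (w x) - m) * w x) 0) Q volume := by
    have h1 := hIfm.pos_part
    have h2 : (fun x => ((Real.log (w x) - m) * w x) ⊔ 0)
        = fun x => max ((Real.log (w x) - m) * w x) 0 := funext fun x => by rfl
    rwa [h2] at h1
  have hstage1 : ∫ x in Q, |Real.log (w x) - m| * w x ≤ 2 * ∫ x in Q, Gf x := by
    have heq1 : ∀ x, |Real.log (w x) - m| * w x
        = 2 * max ((Real.log (w x) - m) * w x) 0 - (Real.log (w x) - m) * w x := by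
      intro x
      have hw' : |Real.log (w x) - m| * w x = |(Real.log (w x) - m) * w x| := by
        rw [abs_mul, abs_of_nonneg (hw0 x)]
      rw [hw']
      rcases le_total ((Real.log (w x) - m) * w x) 0 with h | h
      · rw [abs_of_nonpos h, max_eq_right h]; ring
      · rw [abs_of_nonneg h, max_eq_left h]; ring
    calc ∫ x in Q, |Real.log (w x) - m| * w x
        = ∫ x in Q, (2 * max ((Real.log (w x) - m) * w x) 0
            - (Real.log (w x) - m) * w x) := integral_congr_ae (ae_of_all _ heq1)
      _ = 2 * (∫ x in Q, max ((Real.log (w x) - m) * w x) 0)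
          - ∫ x in Q, (Real.log (w x) - m) * w x := by
          rw [integral_sub (hIfmp.const_mul 2) hIfm, integral_const_mul]
      _ = 2 * ∫ x in Q, max ((Real.log (w x) - m) * w x) 0 := by rw [hmean]; ring
      _ ≤ 2 * ∫ x in Q, Gf x := by
          have hmono : ∀ x, max ((Real.log (w x) - m) * w x) 0 ≤ Gf x := fun x =>
            max_le_max (mul_le_mul_of_nonneg_right (by linarith) (hw0 x)) le_rfl
          have := integral_mono_ae hIfmp hIG (ae_of_all _ hmono)
          linarith
  -- Stage 2 : Calderón-Zygmund + layer cake
  set fplus : Rn n → ℝ := fun x => max (M x - a) 0 with hfplusdef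
  have hstage2 : ∫ x in Q, Gf x ≤ 2 ^ n * ((∫ x in Q, M x) - W) := by
    have hGmeas : Measurable Gf :=
      (((Real.measurable_log.comp hwm).sub measurable_const).mul hwm).max measurable_const
    have hL : ∫ x in Q, Gf x = (∫⁻ x in Q, ENNReal.ofReal (Gf x)).toReal :=
      integral_eq_lintegral_of_nonneg_ae (ae_of_all _ fun x => le_max_right _ _)
        hGmeas.aestronglyMeasurable
    set F : Rn n → ℝ → ℝ≥0∞ :=
      fun x lam => if lam < w x then ENNReal.ofReal (w x / lam) else 0 with hF
    have hunc : Measurable (Function.uncurry F) := by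
      apply Measurable.ite
      · exact measurableSet_lt measurable_snd (hwm.comp measurable_fst)
      · exact ((hwm.comp measurable_fst).div measurable_snd).ennreal_ofReal
      · exact measurable_const
    have hinner : ∀ᵐ x ∂(volume.restrict Q),
        ∫⁻ lam in Set.Ioi a, F x lam = ENNReal.ofReal (Gf x) := by
      filter_upwards [ae_restrict_of_ae hwpos] with x hx
      rcases le_or_gt (w x) a with hcase | hcase
      · have h0 : ∀ lam ∈ Set.Ioi a, F x lam = 0 := fun lam hlam => by
          rw [hF]
          simp only
          rw [if_neg (by push_neg; exact le_trans hcase (le_of_lt hlam))]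
        rw [setLIntegral_congr_fun measurableSet_Ioi h0, lintegral_zero]
        symm
        rw [ENNReal.ofReal_eq_zero, hGfdef]
        simp only
        rw [max_eq_right]
        have hlog : Real.log (w x) ≤ Real.log a := Real.log_le_log hx hcase
        exact mul_nonpos_iff.2 (Or.inr ⟨by linarith, hw0 x⟩)
      · have hInt : IntegrableOn (fun lam => w x / lam) (Set.Ioo a (w x)) volume := by
          have hcont : ContinuousOn (fun lam => w x / lam) (Set.Icc a (w x)) :=
            continuousOn_const.div continuousOn_id
              (fun t ht => ne_of_gt (lt_of_lt_of_le ha0 ht.1))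
          exact hcont.integrableOn_Icc.mono_set Set.Ioo_subset_Icc_self
        have hval : ∫ lam in Set.Ioo a (w x), w x / lam
            = (Real.log (w x) - Real.log a) * w x := by
          rw [← integral_Ioc_eq_integral_Ioo, ← intervalIntegral.integral_of_le hcase.le]
          simp_rw [div_eq_mul_inv]
          rw [intervalIntegral.integral_const_mul, integral_inv_of_pos ha0 hx,
            Real.log_div (ne_of_gt hx) (ne_of_gt ha0)]
          ring
        calc ∫⁻ lam in Set.Ioi a, F x lam
            = ∫⁻ lam in Set.Ioi a, (Set.Iio (w x)).indicator
                (fun lam => ENNReal.ofReal (w x / lam)) lam := by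
              refine lintegral_congr fun lam => ?_
              rw [Set.indicator_apply]
              simp only [Set.mem_Iio, hF]
          _ = ∫⁻ lam in Set.Iio (w x) ∩ Set.Ioi a, ENNReal.ofReal (w x / lam) := by
              rw [lintegral_indicator measurableSet_Iio,
                Measure.restrict_restrict measurableSet_Iio]
          _ = ∫⁻ lam in Set.Ioo a (w x), ENNReal.ofReal (w x / lam) := by
              rw [Set.Iio_inter_Ioi]
          _ = ENNReal.ofReal (∫ lam in Set.Ioo a (w x), w x / lam) := by
              refine (ofReal_integral_eq_lintegral_ofReal hInt ?_).symm
              refine (ae_restrict_iff' measurableSet_Ioo).2 (ae_of_all _ fun lam hlam => ?_)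
              exact div_nonneg (hw0 x) (le_of_lt (lt_trans ha0 hlam.1))
          _ = ENNReal.ofReal (Gf x) := by
              rw [hval, hGfdef]
              simp only
              rw [max_eq_left]
              have hlog : Real.log a ≤ Real.log (w x) := Real.log_le_log ha0 hcase.le
              exact mul_nonneg (by linarith) (hw0 x)
    have hswap : ∫⁻ x in Q, ENNReal.ofReal (Gf x)
        = ∫⁻ lam in Set.Ioi a, ∫⁻ x in Q, F x lam := by
      have h1 : ∫⁻ x in Q, ENNReal.ofReal (Gf x)
          = ∫⁻ x in Q, ∫⁻ lam in Set.Ioi a, F x lam :=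
        lintegral_congr_ae (hinner.mono fun x hx => hx.symm)
      rw [h1]
      exact lintegral_lintegral_swap hunc.aemeasurable
    have hlamb : ∀ lam ∈ Set.Ioi a, (∫⁻ x in Q, F x lam)
        ≤ 2 ^ n * (volume.restrict Q) {x | lam < M x} := by
      intro lam hlam
      have hlam0 : 0 < lam := lt_trans ha0 hlam
      have hlamne : ENNReal.ofReal lam ≠ 0 := by
        simp only [ne_eq, ENNReal.ofReal_eq_zero, not_le]
        exact hlam0
      have hlamW' : intOn w Q ≤ lam * (2 * r) ^ n := by
        have h1 : a * V ≤ lam * V := mul_le_mul_of_nonneg_right (le_of_lt hlam) hV0.le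
        rw [haV] at h1
        rw [← hWdef, ← hVdef]
        exact h1
      have h1 : ∀ x, F x lam = ({y : Rn n | lam < w y}).indicator
          (fun x => ENNReal.ofReal (w x / lam)) x := fun x => by
        rw [Set.indicator_apply]
        simp only [Set.mem_setOf_eq, hF]
      calc ∫⁻ x in Q, F x lam
          = ∫⁻ x in {y | lam < w y} ∩ Q, ENNReal.ofReal (w x / lam) := by
            rw [lintegral_congr fun x => h1 x,
              lintegral_indicator (measurableSet_lt measurable_const hwm),
              Measure.restrict_restrict (measurableSet_lt measurable_const hwm)]
        _ = ∫⁻ x in Q ∩ {y | lam < w y}, ENNReal.ofReal (w x / lam) := by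
            rw [Set.inter_comm]
        _ = (ENNReal.ofReal lam)⁻¹ * ∫⁻ x in Q ∩ {y | lam < w y}, ENNReal.ofReal (w x) := by
            rw [← lintegral_const_mul' _ _ (ENNReal.inv_ne_top.2 hlamne)]
            refine lintegral_congr fun x => ?_
            rw [ENNReal.ofReal_div_of_pos hlam0, ENNReal.div_eq_inv_mul]
        _ ≤ (ENNReal.ofReal lam)⁻¹ * (ENNReal.ofReal lam * 2 ^ n
              * (volume.restrict Q) {x | lam < M x}) :=
            mul_le_mul_right (cz w hw0 hwl c hr hlam0 hlamW') _
        _ = ((ENNReal.ofReal lam)⁻¹ * ENNReal.ofReal lam)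
              * (2 ^ n * (volume.restrict Q) {x | lam < M x}) := by ring
        _ = 2 ^ n * (volume.restrict Q) {x | lam < M x} := by
            rw [ENNReal.inv_mul_cancel hlamne ENNReal.ofReal_ne_top, one_mul]
    have houter : ∫⁻ lam in Set.Ioi a, ∫⁻ x in Q, F x lam
        ≤ 2 ^ n * ∫⁻ lam in Set.Ioi a, (volume.restrict Q) {x | lam < M x} := by
      rw [← lintegral_const_mul' _ _ (ENNReal.pow_ne_top ENNReal.ofNat_ne_top)]
      exact lintegral_mono_ae ((ae_restrict_iff' measurableSet_Ioi).2
        (ae_of_all _ hlamb))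
    have hfplusae : AEMeasurable fplus (volume.restrict Q) :=
      (hM.aestronglyMeasurable.aemeasurable.sub aemeasurable_const).max aemeasurable_const
    have hlay : ∫⁻ x in Q, ENNReal.ofReal (fplus x)
        = ∫⁻ t in Set.Ioi (0:ℝ), (volume.restrict Q) {x | t < fplus x} :=
      lintegral_eq_lintegral_meas_lt _ (ae_of_all _ fun x => le_max_right _ _) hfplusae
    have hshift : ∫⁻ lam in Set.Ioi a, (volume.restrict Q) {x | lam < M x}
        = ∫⁻ t in Set.Ioi (0:ℝ), (volume.restrict Q) {x | t < fplus x} := by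
      have h := (measurePreserving_add_right (volume : Measure ℝ) a).setLIntegral_comp_emb
        (measurableEmbedding_addRight a)
        (fun lam => (volume.restrict Q) {x | lam < M x}) (Set.Ioi 0)
      rw [Set.image_add_const_Ioi, zero_add] at h
      rw [← h]
      refine setLIntegral_congr_fun measurableSet_Ioi (fun t ht => ?_)
      congr 1
      ext x
      simp only [Set.mem_setOf_eq, hfplusdef, lt_max_iff]
      constructor
      · intro h'; left; linarith
      · rintro (h' | h')
        · linarith
        · exact absurd h' (not_lt.2 (le_of_lt ht))
    have hmain : ∫⁻ x in Q, ENNReal.ofReal (Gf x)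
        ≤ 2 ^ n * ∫⁻ x in Q, ENNReal.ofReal (fplus x) := by
      rw [hswap, hlay]
      rw [← hshift]
      exact houter
    have hfint : IntegrableOn fplus Q volume := by
      have h1 : IntegrableOn (fun x => M x - a) Q volume := hM.sub hconstA
      have h2 := h1.pos_part
      have h3 : (fun x => (M x - a) ⊔ 0) = fplus := funext fun x => by rfl
      rwa [h3] at h2
    have hfR : ∫⁻ x in Q, ENNReal.ofReal (fplus x) = ENNReal.ofReal (∫ x in Q, fplus x) :=
      (ofReal_integral_eq_lintegral_ofReal hfint
        (ae_of_all _ fun x => le_max_right _ _)).symm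
    have hintf0 : 0 ≤ ∫ x in Q, fplus x :=
      setIntegral_nonneg hQmeas fun x _ => le_max_right _ _
    have hGle : ∫ x in Q, Gf x ≤ 2 ^ n * ∫ x in Q, fplus x := by
      rw [hL]
      have hne : (2:ℝ≥0∞) ^ n * ENNReal.ofReal (∫ x in Q, fplus x) ≠ ⊤ :=
        ENNReal.mul_ne_top (ENNReal.pow_ne_top ENNReal.ofNat_ne_top) ENNReal.ofReal_ne_top
      have h2 : ∫⁻ x in Q, ENNReal.ofReal (Gf x)
          ≤ (2:ℝ≥0∞) ^ n * ENNReal.ofReal (∫ x in Q, fplus x) := by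
        rw [← hfR]; exact hmain
      calc (∫⁻ x in Q, ENNReal.ofReal (Gf x)).toReal
          ≤ ((2:ℝ≥0∞) ^ n * ENNReal.ofReal (∫ x in Q, fplus x)).toReal :=
            ENNReal.toReal_mono hne h2
        _ = 2 ^ n * ∫ x in Q, fplus x := by
            rw [ENNReal.toReal_mul, ENNReal.toReal_pow, ENNReal.toReal_ofReal hintf0]
            norm_num
    have hfeq : ∫ x in Q, fplus x = (∫ x in Q, M x) - W := by
      have h1 : ∫ x in Q, fplus x = ∫ x in Q, (M x - a) :=
        integral_congr_ae (hMa.mono fun x hx => by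
          rw [hfplusdef]
          simp only
          exact max_eq_left (sub_nonneg.2 hx))
      rw [h1, integral_sub hM hconstA]
      have h2 : ∫ x in Q, (fun _ => a) x ∂volume = (volume Q).toReal • a := setIntegral_const a
      rw [h2, hvQ, smul_eq_mul]
      linarith [haV]
    rw [hfeq] at hGle
    exact hGle
  refine ⟨?_, hpart2⟩
  calc ∫ x in Q, |Real.log (w x) - m| * w x ≤ 2 * ∫ x in Q, Gf x := hstage1
    _ ≤ 2 * (2 ^ n * ((∫ x in Q, M x) - W)) := by linarith
    _ = 2 ^ (n + 1) * ((∫ x in Q, M x) - W) := by ring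

end CZAux4

section FinalAssembly

open Metric Set Filter Topology CZAux CZAux2 CZAux3 CZAux4
open scoped ENNReal NNReal

theorem stmt11' {n : ℕ} (w : Rn n → ℝ) (hw0 : ∀ x, 0 ≤ w x)
    (hwpos : ∀ᵐ x ∂(volume : Measure (Rn n)), 0 < w x)
    (hwl : LocallyIntegrable w volume)
    (hpos : ∀ Q : Set (Rn n), IsCube Q → 0 < intOn w Q)
    (hM : ∀ Q : Set (Rn n), IsCube Q →
      IntegrableOn (maximalFn (Q.indicator w)) Q volume)
    (hlogint : ∀ Q : Set (Rn n), IsCube Q →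
      IntegrableOn (fun x => Real.log (w x) * w x) Q volume)
    (hfw : BddAbove (fwSet w)) :
    (∀ Q : Set (Rn n), IsCube Q →
      (intOn w Q)⁻¹ *
          (∫ x in Q, |Real.log (w x) - wavgOn w Q (fun y => Real.log (w y))| * w x)
        ≤ (2 : ℝ) ^ (n + 3) * (fujiiWilson w - 1)) ∧
    (∀ Q : Set (Rn n), IsCube Q →
      (intOn w Q)⁻¹ *
          (∫ x in Q, |Real.log (w x) - wavgOn w Q (fun y => Real.log (w y))| * w x)
        ≤ (2 : ℝ) ^ (n + 3) *
            ((intOn w Q)⁻¹ * (∫ x in Q, maximalFn (Q.indicator w) x) - 1)) := by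
  have main : ∀ Q : Set (Rn n), IsCube Q →
      ((intOn w Q)⁻¹ *
          (∫ x in Q, |Real.log (w x) - wavgOn w Q (fun y => Real.log (w y))| * w x)
        ≤ (2 : ℝ) ^ (n + 3) *
            ((intOn w Q)⁻¹ * (∫ x in Q, maximalFn (Q.indicator w) x) - 1))
      ∧ 1 ≤ (intOn w Q)⁻¹ * (∫ x in Q, maximalFn (Q.indicator w) x) := by
    rintro Q ⟨c, r, hr, rfl⟩
    have hQc' : IsCube (Metric.closedBall c r) := ⟨c, r, hr, rfl⟩
    have hsm := hwl.aestronglyMeasurable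
    set w2 : Rn n → ℝ := fun x => max (hsm.mk w x) 0 with hw2def
    have hw2m : Measurable w2 := (hsm.stronglyMeasurable_mk.measurable).max measurable_const
    have hw2ae : w2 =ᵐ[volume] w := by
      filter_upwards [hsm.ae_eq_mk] with x hx
      rw [hw2def]
      simp only
      rw [← hx]
      exact max_eq_left (hw0 x)
    have hw20 : ∀ x, 0 ≤ w2 x := fun x => le_max_right _ _
    have hw2pos : ∀ᵐ x ∂(volume : Measure (Rn n)), 0 < w2 x := by
      filter_upwards [hwpos, hw2ae] with x h1 h2
      rw [h2]; exact h1
    have hw2l : LocallyIntegrable w2 volume := by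
      intro x
      obtain ⟨s, hs, hint⟩ := hwl x
      exact ⟨s, hs, hint.congr (ae_restrict_of_ae hw2ae.symm)⟩
    have hintOn : intOn w2 (Metric.closedBall c r) = intOn w (Metric.closedBall c r) := by
      rw [intOn, intOn]
      exact integral_congr_ae (ae_restrict_of_ae hw2ae)
    have havgeq : ∀ Q' : Set (Rn n),
        avgOn Q' (fun y => |(Metric.closedBall c r).indicator w2 y|)
          = avgOn Q' (fun y => |(Metric.closedBall c r).indicator w y|) := by
      intro Q'
      rw [avgOn, avgOn]
      congr 1
      refine integral_congr_ae (ae_restrict_of_ae ?_)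
      filter_upwards [hw2ae] with y hy
      by_cases hyQ : y ∈ Metric.closedBall c r <;> simp [Set.indicator, hyQ, hy]
    have hmax : maximalFn ((Metric.closedBall c r).indicator w2)
        = maximalFn ((Metric.closedBall c r).indicator w) := by
      funext x
      rw [maximalFn_eq, maximalFn_eq]
      congr 1
      ext t
      constructor
      · rintro ⟨Q', hQ', hx, rfl⟩
        exact ⟨Q', hQ', hx, havgeq Q'⟩
      · rintro ⟨Q', hQ', hx, rfl⟩
        exact ⟨Q', hQ', hx, (havgeq Q').symm⟩
    have hwavg : wavgOn w2 (Metric.closedBall c r) (fun y => Real.log (w2 y))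
        = wavgOn w (Metric.closedBall c r) (fun y => Real.log (w y)) := by
      rw [wavgOn, wavgOn, hintOn]
      congr 1
      refine integral_congr_ae (ae_restrict_of_ae ?_)
      filter_upwards [hw2ae] with y hy
      simp only [hy]
    have hpos' := hpos _ hQc'
    have hWpos2 : 0 < intOn w2 (Metric.closedBall c r) := by rw [hintOn]; exact hpos'
    have hM2 : IntegrableOn (maximalFn ((Metric.closedBall c r).indicator w2))
        (Metric.closedBall c r) volume := by rw [hmax]; exact hM _ hQc'
    have hlog2 : IntegrableOn (fun x => Real.log (w2 x) * w2 x)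
        (Metric.closedBall c r) volume := by
      refine (hlogint _ hQc').congr ?_
      refine ae_restrict_of_ae ?_
      filter_upwards [hw2ae] with x hx
      simp only [hx]
    have hcore := core w2 hw2m hw20 hw2pos hw2l c hr hWpos2 hM2 hlog2
    have hosc : (∫ x in Metric.closedBall c r,
        |Real.log (w2 x) - wavgOn w2 (Metric.closedBall c r) (fun y => Real.log (w2 y))|
          * w2 x)
        = ∫ x in Metric.closedBall c r,
            |Real.log (w x) - wavgOn w (Metric.closedBall c r) (fun y => Real.log (w y))|
              * w x := by
      rw [hwavg]
      refine integral_congr_ae (ae_restrict_of_ae ?_)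
      filter_upwards [hw2ae] with x hx
      simp only [hx]
    rw [hosc, hmax, hintOn] at hcore
    obtain ⟨hc1, hc2⟩ := hcore
    have hone : 1 ≤ (intOn w (Metric.closedBall c r))⁻¹ *
        ∫ x in Metric.closedBall c r, maximalFn ((Metric.closedBall c r).indicator w) x := by
      rw [← div_eq_inv_mul, le_div_iff₀ hpos']
      linarith
    refine ⟨?_, hone⟩
    have step1 : (intOn w (Metric.closedBall c r))⁻¹ *
        (∫ x in Metric.closedBall c r,
          |Real.log (w x) - wavgOn w (Metric.closedBall c r) (fun y => Real.log (w y))| * w x)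
        ≤ (intOn w (Metric.closedBall c r))⁻¹ *
          (2 ^ (n + 1) * ((∫ x in Metric.closedBall c r,
            maximalFn ((Metric.closedBall c r).indicator w) x)
            - intOn w (Metric.closedBall c r))) :=
      mul_le_mul_of_nonneg_left hc1 (inv_nonneg.2 hpos'.le)
    have step2 : (intOn w (Metric.closedBall c r))⁻¹ *
        (2 ^ (n + 1) * ((∫ x in Metric.closedBall c r,
          maximalFn ((Metric.closedBall c r).indicator w) x)
          - intOn w (Metric.closedBall c r)))
        = 2 ^ (n + 1) * ((intOn w (Metric.closedBall c r))⁻¹ *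
          (∫ x in Metric.closedBall c r,
            maximalFn ((Metric.closedBall c r).indicator w) x) - 1) := by
      have hWne : intOn w (Metric.closedBall c r) ≠ 0 := ne_of_gt hpos'
      field_simp
    have step4 : (2:ℝ) ^ (n + 1) * ((intOn w (Metric.closedBall c r))⁻¹ *
          (∫ x in Metric.closedBall c r,
            maximalFn ((Metric.closedBall c r).indicator w) x) - 1)
        ≤ 2 ^ (n + 3) * ((intOn w (Metric.closedBall c r))⁻¹ *
          (∫ x in Metric.closedBall c r,
            maximalFn ((Metric.closedBall c r).indicator w) x) - 1) := by
      apply mul_le_mul_of_nonneg_right _ (by linarith)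
      apply pow_le_pow_right₀ (by norm_num) (by omega)
    calc (intOn w (Metric.closedBall c r))⁻¹ *
        (∫ x in Metric.closedBall c r,
          |Real.log (w x) - wavgOn w (Metric.closedBall c r) (fun y => Real.log (w y))| * w x)
        ≤ (intOn w (Metric.closedBall c r))⁻¹ *
          (2 ^ (n + 1) * ((∫ x in Metric.closedBall c r,
            maximalFn ((Metric.closedBall c r).indicator w) x)
            - intOn w (Metric.closedBall c r))) := step1
      _ = 2 ^ (n + 1) * ((intOn w (Metric.closedBall c r))⁻¹ *
          (∫ x in Metric.closedBall c r,
            maximalFn ((Metric.closedBall c r).indicator w) x) - 1) := step2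
      _ ≤ _ := step4
  refine ⟨fun Q hQ => ?_, fun Q hQ => (main Q hQ).1⟩
  have h := main Q hQ
  refine le_trans h.1 ?_
  have hfwQ : (intOn w Q)⁻¹ * (∫ x in Q, maximalFn (Q.indicator w) x) ≤ fujiiWilson w :=
    le_csSup hfw ⟨Q, hQ, rfl⟩
  apply mul_le_mul_of_nonneg_left (by linarith) (by positivity)

end FinalAssembly

/-- For `w ∈ A_∞`, `log w` is in weighted `BMO` with
`‖log w‖_{BMO_w} ≤ 2^(n+3)([w]_{A∞} - 1)`; moreover, the corresponding localized
estimate holds on each cube. -/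
theorem stmt11 {n : ℕ} (w : Rn n → ℝ) (hw0 : ∀ x, 0 ≤ w x)
    (hwpos : ∀ᵐ x ∂(volume : Measure (Rn n)), 0 < w x)
    (hwl : LocallyIntegrable w volume)
    (hpos : ∀ Q : Set (Rn n), IsCube Q → 0 < intOn w Q)
    (hM : ∀ Q : Set (Rn n), IsCube Q →
      IntegrableOn (maximalFn (Q.indicator w)) Q volume)
    (hlogint : ∀ Q : Set (Rn n), IsCube Q →
      IntegrableOn (fun x => Real.log (w x) * w x) Q volume)
    (hfw : BddAbove (fwSet w)) :
    (∀ Q : Set (Rn n), IsCube Q →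
      (intOn w Q)⁻¹ *
          (∫ x in Q, |Real.log (w x) - wavgOn w Q (fun y => Real.log (w y))| * w x)
        ≤ (2 : ℝ) ^ (n + 3) * (fujiiWilson w - 1)) ∧
    (∀ Q : Set (Rn n), IsCube Q →
      (intOn w Q)⁻¹ *
          (∫ x in Q, |Real.log (w x) - wavgOn w Q (fun y => Real.log (w y))| * w x)
        ≤ (2 : ℝ) ^ (n + 3) *
            ((intOn w Q)⁻¹ * (∫ x in Q, maximalFn (Q.indicator w) x) - 1)) := by
  exact stmt11' w hw0 hwpos hwl hpos hM hlogint hfw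
end
end
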